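/- arXiv:2111.04691 — 5 statements merged into one kernel-verified Lean document; each statement's English description precedes it below -/
import Mathlib

section
/- Let V: ℝ → [0,∞) be an Orlicz function, R ∈ (0,∞), and λ: ℝ → ℝ a bounded continuous function. Then there exists a unique α(λ) ∈ (-∞,0) such that ∫_ℝ V(x) e^{α(λ)V(x)+λ(x)} dx = R · ∫_ℝ e^{α(λ)V(x)+λ(x)} dx; moreover, for this α(λ), the variance of V under the probability density x ↦ e^{α(λ)V(x)+λ(x)}/∫_ℝ e^{α(λ)V(t)+λ(t)} dt, namely ∫ V(x)² e^{α(λ)V(x)+λ(x)-φ_V(α(λ),λ)} dx − (∫ V(x) e^{α(λ)V(x)+λ(x)-φ_V(α(λ),λ)} dx)², is strictly positive and finite. -/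
open MeasureTheory Real Filter Topology ENNReal

open Set

noncomputable section

/-- An Orlicz function: convex, symmetric, vanishing only at `0`, nonnegative. -/
def IsOrlicz (V : ℝ → ℝ) : Prop :=
  ConvexOn ℝ Set.univ V ∧ (∀ x, V (-x) = V x) ∧ V 0 = 0 ∧ (∀ x, x ≠ 0 → 0 < V x) ∧
    (∀ x, 0 ≤ V x)

/-- `φ_V(α, λ) = log ∫ e^{α V(x) + λ(x)} dx`. -/
def phiV (V lam : ℝ → ℝ) (α : ℝ) : ℝ := Real.log (∫ x : ℝ, Real.exp (α * V x + lam x))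

namespace Stmt0Aux

lemma pow_le_factorial_mul_exp (k : ℕ) {t : ℝ} (ht : 0 ≤ t) :
    t ^ k ≤ (k.factorial : ℝ) * Real.exp t := by
  have h := Real.sum_le_exp_of_nonneg ht (k + 1)
  have h2 : t ^ k / (k.factorial : ℝ) ≤ ∑ i ∈ Finset.range (k + 1), t ^ i / i.factorial :=
    Finset.single_le_sum (f := fun i => t ^ i / (i.factorial : ℝ))
      (fun i _ => by positivity) (Finset.self_mem_range_succ k)
  have hk : (0 : ℝ) < k.factorial := by exact_mod_cast k.factorial_pos
  rw [div_le_iff₀ hk] at h2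
  calc t ^ k ≤ (∑ i ∈ Finset.range (k + 1), t ^ i / i.factorial) * k.factorial := h2
    _ ≤ Real.exp t * k.factorial := by gcongr
    _ = (k.factorial : ℝ) * Real.exp t := by ring

lemma pow_mul_exp_le (k : ℕ) {s t : ℝ} (hs : s < 0) (ht : 0 ≤ t) :
    t ^ k * Real.exp (s * t) ≤ (k.factorial : ℝ) * (-2 / s) ^ k * Real.exp (s / 2 * t) := by
  have h1 : (0:ℝ) ≤ -s / 2 * t := by nlinarith
  have h2 : ((-s / 2) * t) ^ k ≤ (k.factorial : ℝ) * Real.exp ((-s / 2) * t) :=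
    pow_le_factorial_mul_exp k h1
  have hs0 : s ≠ 0 := ne_of_lt hs
  have ht' : t = (-2 / s) * ((-s / 2) * t) := by field_simp
  have hexp : Real.exp ((-s / 2) * t) * Real.exp (s * t) = Real.exp (s / 2 * t) := by
    rw [← Real.exp_add]; ring_nf
  calc t ^ k * Real.exp (s * t) = (-2 / s) ^ k * ((-s / 2) * t) ^ k * Real.exp (s * t) := by
        rw [← mul_pow, ← ht']
    _ ≤ (-2 / s) ^ k * ((k.factorial : ℝ) * Real.exp ((-s / 2) * t)) * Real.exp (s * t) := by
        have hp : (0:ℝ) ≤ (-2 / s) ^ k :=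
          pow_nonneg (div_pos_of_neg_of_neg (by norm_num) hs).le k
        have := (Real.exp_pos (s * t)).le
        gcongr
    _ = (k.factorial : ℝ) * (-2 / s) ^ k * (Real.exp ((-s / 2) * t) * Real.exp (s * t)) := by ring
    _ = (k.factorial : ℝ) * (-2 / s) ^ k * Real.exp (s / 2 * t) := by rw [hexp]

lemma integrable_exp_neg_mul_abs {m : ℝ} (hm : 0 < m) :
    Integrable (fun x : ℝ => Real.exp (-(m * |x|))) := by
  have h1 : IntegrableOn (fun x : ℝ => Real.exp (-(m * |x|))) (Ici 0) := by
    rw [integrableOn_Ici_iff_integrableOn_Ioi]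
    exact (exp_neg_integrableOn_Ioi 0 hm).congr_fun
      (fun x hx => by simp only [abs_of_pos (mem_Ioi.mp hx), neg_mul]) measurableSet_Ioi
  set g : ℝ → ℝ := (Ici (0:ℝ)).indicator (fun x => Real.exp (-(m * |x|))) with hg
  have hgi : Integrable g := h1.integrable_indicator measurableSet_Ici
  have hGi : Integrable (fun x => g x + g (-x)) := hgi.add hgi.comp_neg
  apply hGi.mono
  · exact (Real.continuous_exp.comp ((continuous_const.mul continuous_abs).neg)).aestronglyMeasurable
  · filter_upwards with x
    have hfx : 0 ≤ Real.exp (-(m * |x|)) := (Real.exp_pos _).le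
    have hsum : Real.exp (-(m * |x|)) ≤ g x + g (-x) := by
      rcases le_or_gt 0 x with hx | hx
      · have hgx : g x = Real.exp (-(m * |x|)) := indicator_of_mem hx _
        have hgnx : 0 ≤ g (-x) := indicator_nonneg (fun y _ => (Real.exp_pos _).le) _
        linarith
      · have hgnx : g (-x) = Real.exp (-(m * |(-x)|)) :=
          indicator_of_mem (by linarith : (0:ℝ) ≤ -x) _
        rw [abs_neg] at hgnx
        have hgx : 0 ≤ g x := indicator_nonneg (fun y _ => (Real.exp_pos _).le) _
        linarith
    have hsumnn : 0 ≤ g x + g (-x) := le_trans hfx hsum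
    rw [Real.norm_eq_abs, Real.norm_eq_abs, abs_of_nonneg hfx, abs_of_nonneg hsumnn]
    exact hsum

end Stmt0Aux

lemma orlicz_nonneg {V : ℝ → ℝ} (hV : IsOrlicz V) : ∀ x, 0 ≤ V x := hV.2.2.2.2

lemma orlicz_cont {V : ℝ → ℝ} (hV : IsOrlicz V) : Continuous V :=
  hV.1.locallyLipschitz.continuous

lemma orlicz_scale {V : ℝ → ℝ} (hV : IsOrlicz V) {a b : ℝ} (ha : 0 ≤ a) (hab : a ≤ b)
    (hb : 0 < b) : V a ≤ a / b * V b := by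
  have h := hV.1.2 (Set.mem_univ b) (Set.mem_univ (0 : ℝ))
    (show (0:ℝ) ≤ a / b by positivity)
    (show (0:ℝ) ≤ 1 - a / b by rw [sub_nonneg, div_le_one hb]; exact hab) (by ring)
  have hab' : (a / b) • b + (1 - a / b) • (0 : ℝ) = a := by
    rw [smul_eq_mul, smul_eq_mul, mul_zero, add_zero]; exact div_mul_cancel₀ a hb.ne'
  rw [hab'] at h
  have h0 : V 0 = 0 := hV.2.2.1
  rw [h0] at h
  simpa [smul_eq_mul] using h

lemma orlicz_mono {V : ℝ → ℝ} (hV : IsOrlicz V) {a b : ℝ} (ha : 0 ≤ a) (hab : a ≤ b) :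
    V a ≤ V b := by
  rcases eq_or_lt_of_le (ha.trans hab) with hb | hb
  · have ha0 : a = 0 := le_antisymm (hab.trans hb.symm.le) ha
    rw [ha0, ← hb, hV.2.2.1]
  · calc V a ≤ a / b * V b := orlicz_scale hV ha hab hb
      _ ≤ 1 * V b := by
        apply mul_le_mul_of_nonneg_right _ (orlicz_nonneg hV b)
        rw [div_le_one hb]; exact hab
      _ = V b := one_mul _

lemma orlicz_abs {V : ℝ → ℝ} (hV : IsOrlicz V) (x : ℝ) : V x = V |x| := by
  rcases le_or_gt 0 x with hx | hx
  · rw [abs_of_nonneg hx]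
  · rw [abs_of_neg hx, ← hV.2.1 x]

lemma orlicz_mono_abs {V : ℝ → ℝ} (hV : IsOrlicz V) {a b : ℝ} (hab : |a| ≤ |b|) :
    V a ≤ V b := by
  rw [orlicz_abs hV a, orlicz_abs hV b]
  exact orlicz_mono hV (abs_nonneg a) hab

lemma orlicz_lin {V : ℝ → ℝ} (hV : IsOrlicz V) {x : ℝ} (hx : 1 ≤ |x|) :
    V 1 * |x| ≤ V x := by
  rw [orlicz_abs hV x]
  have h := orlicz_scale hV zero_le_one hx (lt_of_lt_of_le one_pos hx)
  have hxpos : 0 < |x| := lt_of_lt_of_le one_pos hx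
  rw [div_mul_eq_mul_div, le_div_iff₀ hxpos] at h
  linarith [h]

lemma integrable_main {V lam : ℝ → ℝ} {C : ℝ} (hV : IsOrlicz V) (hlamc : Continuous lam)
    (hC : ∀ x, |lam x| ≤ C) (k : ℕ) {α : ℝ} (hα : α < 0) :
    Integrable (fun x : ℝ => V x ^ k * Real.exp (α * V x + lam x)) := by
  have hVc : Continuous V := orlicz_cont hV
  set c := V 1 with hc
  have hc0 : 0 < c := hV.2.2.2.1 1 one_ne_zero
  set m := (-α / 2) * c with hm
  have hm0 : 0 < m := by
    apply mul_pos _ hc0; linarith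
  set B := (k.factorial : ℝ) * (-2 / α) ^ k * Real.exp C * Real.exp m with hB
  have hmeas : AEStronglyMeasurable (fun x : ℝ => V x ^ k * Real.exp (α * V x + lam x)) volume :=
    ((hVc.pow k).mul (Real.continuous_exp.comp
      ((continuous_const.mul hVc).add hlamc))).aestronglyMeasurable
  apply Integrable.mono ((Stmt0Aux.integrable_exp_neg_mul_abs hm0).const_mul B) hmeas
  filter_upwards with x
  have hVnn := orlicz_nonneg hV x
  have h1 : V x ^ k * Real.exp (α * V x) ≤ (k.factorial : ℝ) * (-2 / α) ^ k *
      Real.exp (α / 2 * V x) := Stmt0Aux.pow_mul_exp_le k hα hVnn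
  have h2 : Real.exp (α / 2 * V x) ≤ Real.exp m * Real.exp (-(m * |x|)) := by
    rw [← Real.exp_add]
    apply Real.exp_le_exp.2
    rcases le_or_gt 1 |x| with h | h
    · have hlin := orlicz_lin hV h
      rw [← hc] at hlin
      have : α / 2 * V x ≤ α / 2 * (c * |x|) := by
        apply mul_le_mul_of_nonpos_left hlin (by linarith)
      have heq : α / 2 * (c * |x|) = -(m * |x|) := by rw [hm]; ring
      have hmnn : 0 ≤ m := hm0.le
      nlinarith [this, heq]
    · have h1' : α / 2 * V x ≤ 0 := mul_nonpos_of_nonpos_of_nonneg (by linarith) hVnn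
      have h2' : m * |x| ≤ m := by nlinarith [abs_nonneg x]
      linarith
  have hlam : Real.exp (lam x) ≤ Real.exp C := Real.exp_le_exp.2 (le_of_abs_le (hC x))
  have hnorm : ‖V x ^ k * Real.exp (α * V x + lam x)‖
      = V x ^ k * Real.exp (α * V x + lam x) := by
    rw [Real.norm_eq_abs, abs_of_nonneg (mul_nonneg (pow_nonneg hVnn k) (Real.exp_pos _).le)]
  have hBnn : 0 ≤ B := by
    have := pow_nonneg (div_pos_of_neg_of_neg (by norm_num : (-2:ℝ) < 0) hα).le k
    rw [hB]; positivity
  rw [hnorm, Real.norm_eq_abs, abs_of_nonneg (mul_nonneg hBnn (Real.exp_pos _).le)]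
  calc V x ^ k * Real.exp (α * V x + lam x)
      = (V x ^ k * Real.exp (α * V x)) * Real.exp (lam x) := by rw [Real.exp_add]; ring
    _ ≤ ((k.factorial : ℝ) * (-2 / α) ^ k * Real.exp (α / 2 * V x)) * Real.exp C := by
        have hf : (0:ℝ) ≤ (k.factorial : ℝ) * (-2 / α) ^ k * Real.exp (α / 2 * V x) := by
          have := pow_nonneg (div_pos_of_neg_of_neg (by norm_num : (-2:ℝ) < 0) hα).le k
          positivity
        apply mul_le_mul h1 hlam (Real.exp_pos _).le hf
    _ ≤ ((k.factorial : ℝ) * (-2 / α) ^ k * (Real.exp m * Real.exp (-(m * |x|)))) *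
          Real.exp C := by
        have := pow_nonneg (div_pos_of_neg_of_neg (by norm_num : (-2:ℝ) < 0) hα).le k
        have hf2 : (0:ℝ) ≤ (k.factorial : ℝ) * (-2 / α) ^ k := by positivity
        apply mul_le_mul_of_nonneg_right _ (Real.exp_pos _).le
        apply mul_le_mul_of_nonneg_left h2 hf2
    _ = B * Real.exp (-(m * |x|)) := by rw [hB]; ring

lemma integral_pos_of_cont {f : ℝ → ℝ} (hf : Continuous f) (h0 : ∀ x, 0 ≤ f x)
    (hi : Integrable f) {x₀ : ℝ} (hx₀ : 0 < f x₀) : 0 < ∫ x, f x := by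
  rw [integral_pos_iff_support_of_nonneg (fun x => h0 x) hi]
  have hopen : IsOpen {x : ℝ | 0 < f x} := isOpen_lt continuous_const hf
  have hsub : {x : ℝ | 0 < f x} ⊆ Function.support f := fun x hx => ne_of_gt hx
  exact lt_of_lt_of_le (hopen.measure_pos volume ⟨x₀, hx₀⟩) (measure_mono hsub)

lemma corr_strict {V lam : ℝ → ℝ} {C : ℝ} (hV : IsOrlicz V) (hlamc : Continuous lam)
    (hC : ∀ x, |lam x| ≤ C) {α₁ α₂ : ℝ} (h1 : α₁ < 0) (h2 : α₂ < 0) (h12 : α₁ < α₂) :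
    (∫ x : ℝ, V x * Real.exp (α₁ * V x + lam x)) * (∫ x : ℝ, Real.exp (α₂ * V x + lam x))
      < (∫ x : ℝ, V x * Real.exp (α₂ * V x + lam x)) *
        (∫ x : ℝ, Real.exp (α₁ * V x + lam x)) := by
  have hVc : Continuous V := orlicz_cont hV
  set β := α₂ - α₁ with hβ
  have hβ0 : 0 < β := by linarith
  set f₁ : ℝ → ℝ := fun x => Real.exp (α₁ * V x + lam x) with hf₁
  set f₂ : ℝ → ℝ := fun x => Real.exp (α₂ * V x + lam x) with hf₂
  set g₁ : ℝ → ℝ := fun x => V x * f₁ x with hg₁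
  set g₂ : ℝ → ℝ := fun x => V x * f₂ x with hg₂
  have if₁ : Integrable f₁ := by
    have := integrable_main (C := C) hV hlamc hC 0 h1; simpa using this
  have if₂ : Integrable f₂ := by
    have := integrable_main (C := C) hV hlamc hC 0 h2; simpa using this
  have ig₁ : Integrable g₁ := by
    have := integrable_main (C := C) hV hlamc hC 1 h1; simpa using this
  have ig₂ : Integrable g₂ := by
    have := integrable_main (C := C) hV hlamc hC 1 h2; simpa using this
  set μ := (volume : Measure ℝ).prod (volume : Measure ℝ) with hμ
  set h : ℝ × ℝ → ℝ := fun p =>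
    (V p.1 - V p.2) * (Real.exp (β * V p.1) - Real.exp (β * V p.2)) * (f₁ p.1 * f₁ p.2)
    with hh
  have hf₂eq : ∀ x, f₂ x = Real.exp (β * V x) * f₁ x := by
    intro x
    rw [hf₂, hf₁]
    simp only [← Real.exp_add]
    congr 1
    rw [hβ]; ring
  have hfun : h = fun p => (g₂ p.1 * f₁ p.2 - g₁ p.1 * f₂ p.2)
      + (f₁ p.1 * g₂ p.2 - f₂ p.1 * g₁ p.2) := by
    funext p
    simp only [hh, hg₂, hg₁]
    rw [hf₂eq p.1, hf₂eq p.2]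
    ring
  have iA1 : Integrable (fun p : ℝ × ℝ => g₂ p.1 * f₁ p.2) μ := ig₂.mul_prod if₁
  have iA2 : Integrable (fun p : ℝ × ℝ => g₁ p.1 * f₂ p.2) μ := ig₁.mul_prod if₂
  have iB1 : Integrable (fun p : ℝ × ℝ => f₁ p.1 * g₂ p.2) μ := if₁.mul_prod ig₂
  have iB2 : Integrable (fun p : ℝ × ℝ => f₂ p.1 * g₁ p.2) μ := if₂.mul_prod ig₁
  have iA : Integrable (fun p : ℝ × ℝ => g₂ p.1 * f₁ p.2 - g₁ p.1 * f₂ p.2) μ := iA1.sub iA2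
  have iB : Integrable (fun p : ℝ × ℝ => f₁ p.1 * g₂ p.2 - f₂ p.1 * g₁ p.2) μ := iB1.sub iB2
  have hint : Integrable h μ := by
    rw [hfun]
    exact iA.add iB
  have hintval : ∫ p, h p ∂μ =
      ((∫ x : ℝ, g₂ x) * (∫ x : ℝ, f₁ x) - (∫ x : ℝ, g₁ x) * (∫ x : ℝ, f₂ x))
      + ((∫ x : ℝ, f₁ x) * (∫ x : ℝ, g₂ x) - (∫ x : ℝ, f₂ x) * (∫ x : ℝ, g₁ x)) := by
    have e1 : ∫ p, h p ∂μ = ∫ p : ℝ × ℝ,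
        (g₂ p.1 * f₁ p.2 - g₁ p.1 * f₂ p.2 + (f₁ p.1 * g₂ p.2 - f₂ p.1 * g₁ p.2)) ∂μ := by
      rw [hfun]
    rw [e1, integral_add iA iB, integral_sub iA1 iA2, integral_sub iB1 iB2,
      integral_prod_mul, integral_prod_mul, integral_prod_mul, integral_prod_mul]
  -- nonnegativity of h
  have hnn : ∀ p : ℝ × ℝ, 0 ≤ h p := by
    intro p
    simp only [hh]
    have hff : 0 ≤ f₁ p.1 * f₁ p.2 := mul_nonneg (Real.exp_pos _).le (Real.exp_pos _).le
    rcases le_total (V p.1) (V p.2) with hle | hle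
    · have he : Real.exp (β * V p.1) ≤ Real.exp (β * V p.2) :=
        Real.exp_le_exp.2 (mul_le_mul_of_nonneg_left hle hβ0.le)
      have hx : 0 ≤ (V p.2 - V p.1) * (Real.exp (β * V p.2) - Real.exp (β * V p.1)) :=
        mul_nonneg (by linarith) (by linarith)
      nlinarith [mul_nonneg hx hff]
    · have he : Real.exp (β * V p.2) ≤ Real.exp (β * V p.1) :=
        Real.exp_le_exp.2 (mul_le_mul_of_nonneg_left hle hβ0.le)
      have hx : 0 ≤ (V p.1 - V p.2) * (Real.exp (β * V p.1) - Real.exp (β * V p.2)) :=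
        mul_nonneg (by linarith) (by linarith)
      nlinarith [mul_nonneg hx hff]
  -- h is positive on S = Icc 1 2 ×ˢ Icc 3 4
  set S : Set (ℝ × ℝ) := Set.Icc (1:ℝ) 2 ×ˢ Set.Icc (3:ℝ) 4 with hS
  have hSpos : ∀ p ∈ S, 0 < h p := by
    rintro ⟨x, y⟩ ⟨hx, hy⟩
    have hVx : V x ≤ V 2 := orlicz_mono hV (by linarith [hx.1]) hx.2
    have hV23 : V 2 < V 3 := by
      have := orlicz_scale hV (by norm_num : (0:ℝ) ≤ 2) (by norm_num : (2:ℝ) ≤ 3)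
        (by norm_num : (0:ℝ) < 3)
      have hV3 : 0 < V 3 := hV.2.2.2.1 3 (by norm_num)
      nlinarith
    have hVy : V 3 ≤ V y := orlicz_mono hV (by norm_num) hy.1
    have hxy : V x < V y := by linarith
    have he : Real.exp (β * V x) < Real.exp (β * V y) :=
      Real.exp_lt_exp.2 (by nlinarith)
    have hff : 0 < f₁ x * f₁ y := mul_pos (Real.exp_pos _) (Real.exp_pos _)
    rw [hh]
    have : 0 < (V x - V y) * (Real.exp (β * V x) - Real.exp (β * V y)) :=
      mul_pos_of_neg_of_neg (by linarith) (by linarith)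
    exact mul_pos this hff
  -- minimum on S
  have hScomp : IsCompact S := isCompact_Icc.prod isCompact_Icc
  have hSne : S.Nonempty := ⟨(1, 3), by constructor <;> constructor <;> norm_num⟩
  have hhcont : Continuous h := by
    rw [hh]
    apply Continuous.mul
    apply Continuous.mul
    · exact (hVc.comp continuous_fst).sub (hVc.comp continuous_snd)
    · exact (Real.continuous_exp.comp (continuous_const.mul (hVc.comp continuous_fst))).sub
        (Real.continuous_exp.comp (continuous_const.mul (hVc.comp continuous_snd)))
    · exact ((Real.continuous_exp.comp ((continuous_const.mul (hVc.comp continuous_fst)).add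
        (hlamc.comp continuous_fst)))).mul
        ((Real.continuous_exp.comp ((continuous_const.mul (hVc.comp continuous_snd)).add
        (hlamc.comp continuous_snd))))
  obtain ⟨z, hzS, hzmin⟩ := hScomp.exists_isMinOn hSne hhcont.continuousOn
  have hε : 0 < h z := hSpos z hzS
  have hSmeas : MeasurableSet S := measurableSet_Icc.prod measurableSet_Icc
  have hμS : μ S = 1 := by
    rw [hμ, hS, Measure.prod_prod, Real.volume_Icc, Real.volume_Icc]
    norm_num
  have hlow : h z * (μ S).toReal ≤ ∫ p in S, h p ∂μ :=
    setIntegral_ge_of_const_le_real hSmeas (by rw [hμS]; exact one_ne_top)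
      (fun p hp => isMinOn_iff.mp hzmin p hp) hint.integrableOn
  have hup : ∫ p in S, h p ∂μ ≤ ∫ p, h p ∂μ :=
    setIntegral_le_integral hint (Filter.Eventually.of_forall hnn)
  have hpos : 0 < ∫ p, h p ∂μ := by
    rw [hμS] at hlow
    simp only [ENNReal.toReal_one, mul_one] at hlow
    linarith
  rw [hintval] at hpos
  -- conclude
  linarith

lemma integrable_exp0 {V lam : ℝ → ℝ} {C : ℝ} (hV : IsOrlicz V) (hlamc : Continuous lam)
    (hC : ∀ x, |lam x| ≤ C) {α : ℝ} (hα : α < 0) :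
    Integrable (fun x : ℝ => Real.exp (α * V x + lam x)) := by
  simpa using integrable_main (C := C) hV hlamc hC 0 hα

lemma integrable_exp1 {V lam : ℝ → ℝ} {C : ℝ} (hV : IsOrlicz V) (hlamc : Continuous lam)
    (hC : ∀ x, |lam x| ≤ C) {α : ℝ} (hα : α < 0) :
    Integrable (fun x : ℝ => V x * Real.exp (α * V x + lam x)) := by
  simpa using integrable_main (C := C) hV hlamc hC 1 hα

lemma integrable_expF {V lam : ℝ → ℝ} {C R : ℝ} (hV : IsOrlicz V) (hlamc : Continuous lam)
    (hC : ∀ x, |lam x| ≤ C) {α : ℝ} (hα : α < 0) :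
    Integrable (fun x : ℝ => (V x - R) * Real.exp (α * V x + lam x)) := by
  have h1 := integrable_exp1 (C := C) hV hlamc hC hα
  have h0 := (integrable_exp0 (C := C) hV hlamc hC hα).const_mul R
  have h : Integrable (fun x : ℝ => V x * Real.exp (α * V x + lam x)
      - R * Real.exp (α * V x + lam x)) := h1.sub h0
  exact h.congr (Filter.Eventually.of_forall fun x => by ring)

lemma contF {V lam : ℝ → ℝ} {C : ℝ} (R : ℝ) (hV : IsOrlicz V) (hlamc : Continuous lam)
    (hC : ∀ x, |lam x| ≤ C) {α₀ : ℝ} (hα₀ : α₀ < 0) :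
    ContinuousAt (fun α => ∫ x : ℝ, (V x - R) * Real.exp (α * V x + lam x)) α₀ := by
  have hVc : Continuous V := orlicz_cont hV
  have hVnn := orlicz_nonneg hV
  apply continuousAt_of_dominated
    (bound := fun x => (V x + |R|) * Real.exp (α₀ / 2 * V x + lam x))
  · filter_upwards with α
    exact (((hVc.sub continuous_const).mul (Real.continuous_exp.comp
      ((continuous_const.mul hVc).add hlamc)))).aestronglyMeasurable
  · have hmem : Iio (α₀ / 2) ∈ 𝓝 α₀ := Iio_mem_nhds (by linarith)
    filter_upwards [hmem] with α hα
    filter_upwards with x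
    rw [Real.norm_eq_abs, abs_mul, abs_of_nonneg (Real.exp_pos _).le]
    apply mul_le_mul
    · exact (abs_sub (V x) R).trans (by rw [abs_of_nonneg (hVnn x)])
    · apply Real.exp_le_exp.2
      have : α * V x ≤ α₀ / 2 * V x := mul_le_mul_of_nonneg_right (le_of_lt hα) (hVnn x)
      linarith
    · exact (Real.exp_pos _).le
    · exact add_nonneg (hVnn x) (abs_nonneg R)
  · have h1 : Integrable (fun x : ℝ => V x * Real.exp (α₀ / 2 * V x + lam x)) :=
      integrable_exp1 (C := C) hV hlamc hC (by linarith)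
    have h0 := (integrable_exp0 (C := C) hV hlamc hC
      (show α₀ / 2 < 0 by linarith)).const_mul |R|
    have h : Integrable (fun x : ℝ => V x * Real.exp (α₀ / 2 * V x + lam x)
        + |R| * Real.exp (α₀ / 2 * V x + lam x)) := h1.add h0
    exact h.congr (Filter.Eventually.of_forall fun x => by ring)
  · filter_upwards with x
    exact (continuous_const.mul (Real.continuous_exp.comp
      ((continuous_id.mul continuous_const).add continuous_const))).continuousAt

lemma pos_side {V lam : ℝ → ℝ} {C R : ℝ} (hV : IsOrlicz V) (hlamc : Continuous lam)
    (hC : ∀ x, |lam x| ≤ C) (hR : 0 < R) :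
    ∃ b₀ : ℝ, b₀ < 0 ∧ ∀ b, b₀ ≤ b → b < 0 →
      0 < ∫ x : ℝ, (V x - R) * Real.exp (b * V x + lam x) := by
  have hVnn := orlicz_nonneg hV
  set c := V 1 with hc
  have hc0 : 0 < c := hV.2.2.2.1 1 one_ne_zero
  set r := max 1 (R / c) with hr
  have hr1 : (1:ℝ) ≤ r := le_max_left _ _
  have hr0 : 0 < r := lt_of_lt_of_le one_pos hr1
  have hVbig : ∀ x : ℝ, r < |x| → R ≤ V x := by
    intro x hx
    have h1 : 1 ≤ |x| := le_trans hr1 hx.le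
    have hlin := orlicz_lin hV h1
    rw [← hc] at hlin
    have h2 : R / c ≤ r := le_max_right _ _
    have h3 : R ≤ c * r := by rw [← div_le_iff₀' hc0]; exact h2
    nlinarith
  set s0 := max 1 (2 * R / c) with hs0
  have hs01 : (1:ℝ) ≤ s0 := le_max_left _ _
  have hVs0 : ∀ x : ℝ, s0 ≤ x → 2 * R ≤ V x := by
    intro x hx
    have hx1 : 1 ≤ x := le_trans hs01 hx
    have h1 : 1 ≤ |x| := by rw [abs_of_nonneg (by linarith)]; exact hx1
    have hlin := orlicz_lin hV h1
    rw [← hc, abs_of_nonneg (by linarith : (0:ℝ) ≤ x)] at hlin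
    have h2 : 2 * R / c ≤ s0 := le_max_right _ _
    have h3 : 2 * R ≤ c * s0 := by rw [← div_le_iff₀' hc0]; exact h2
    nlinarith
  set L := 2 * r * Real.exp (2 * C) + 1 with hL
  have hL0 : 0 < L := by positivity
  set M := V (s0 + L) with hM
  have hM0 : 0 < M := hV.2.2.2.1 _ (by positivity)
  set q := 2 * r * Real.exp (2 * C) / L with hq
  have hq0 : 0 < q := by positivity
  have hq1 : q < 1 := by
    rw [hq, div_lt_one hL0]; linarith
  refine ⟨Real.log ((q + 1) / 2) / M, ?_, ?_⟩
  · apply div_neg_of_neg_of_pos _ hM0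
    apply Real.log_neg (by linarith) (by linarith)
  intro b hb0 hb
  have hVc : Continuous V := orlicz_cont hV
  have hFint := integrable_expF (C := C) (R := R) hV hlamc hC hb
  have hexpM : q < Real.exp (b * M) := by
    have h1 : Real.log ((q + 1) / 2) / M * M = Real.log ((q + 1) / 2) := by
      field_simp
    have h2 : Real.log ((q + 1) / 2) ≤ b * M := by
      rw [← h1]
      exact mul_le_mul_of_nonneg_right hb0 hM0.le
    calc q < (q + 1) / 2 := by linarith
      _ = Real.exp (Real.log ((q + 1) / 2)) := (Real.exp_log (by linarith)).symm
      _ ≤ Real.exp (b * M) := Real.exp_le_exp.2 h2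
  -- lower bound function
  set LB : ℝ → ℝ := fun x => (Set.Icc s0 (s0 + L)).indicator
      (fun _ => R * Real.exp (b * M - C)) x
    - (Set.Icc (-r) r).indicator (fun _ => R * Real.exp C) x with hLB
  have i1 : Integrable ((Set.Icc s0 (s0 + L)).indicator
      (fun _ : ℝ => R * Real.exp (b * M - C))) := by
    apply IntegrableOn.integrable_indicator _ measurableSet_Icc
    exact integrableOn_const measure_Icc_lt_top.ne
  have i2 : Integrable ((Set.Icc (-r) r).indicator (fun _ : ℝ => R * Real.exp C)) := by
    apply IntegrableOn.integrable_indicator _ measurableSet_Icc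
    exact integrableOn_const measure_Icc_lt_top.ne
  have hLBint : Integrable LB := i1.sub i2
  have hpt : ∀ x : ℝ, LB x ≤ (V x - R) * Real.exp (b * V x + lam x) := by
    intro x
    have hlamx := abs_le.1 (hC x)
    simp only [hLB]
    by_cases hxI : x ∈ Set.Icc s0 (s0 + L)
    · rw [Set.indicator_of_mem hxI]
      have hge : R * Real.exp (b * M - C) ≤ (V x - R) * Real.exp (b * V x + lam x) := by
        have hV2R : 2 * R ≤ V x := hVs0 x hxI.1
        have hVM : V x ≤ M := by
          rw [hM]; exact orlicz_mono hV (by linarith [hxI.1, hs01]) hxI.2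
        have hexple : Real.exp (b * M - C) ≤ Real.exp (b * V x + lam x) := by
          apply Real.exp_le_exp.2
          have : b * M ≤ b * V x := mul_le_mul_of_nonpos_left hVM hb.le
          linarith
        calc R * Real.exp (b * M - C) ≤ (V x - R) * Real.exp (b * M - C) := by
              apply mul_le_mul_of_nonneg_right (by linarith) (Real.exp_pos _).le
          _ ≤ (V x - R) * Real.exp (b * V x + lam x) := by
              apply mul_le_mul_of_nonneg_left hexple (by linarith)
      have hind : 0 ≤ (Set.Icc (-r) r).indicator (fun _ : ℝ => R * Real.exp C) x :=
        Set.indicator_nonneg (fun _ _ => by positivity) x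
      linarith
    · rw [Set.indicator_of_notMem hxI]
      by_cases hxr : x ∈ Set.Icc (-r) r
      · rw [Set.indicator_of_mem hxr]
        have hexpC : Real.exp (b * V x + lam x) ≤ Real.exp C := by
          apply Real.exp_le_exp.2
          have : b * V x ≤ 0 := mul_nonpos_of_nonpos_of_nonneg hb.le (hVnn x)
          linarith
        have h1 : 0 ≤ V x * Real.exp (b * V x + lam x) :=
          mul_nonneg (hVnn x) (Real.exp_pos _).le
        have h2 : 0 ≤ R * (Real.exp C - Real.exp (b * V x + lam x)) :=
          mul_nonneg hR.le (by linarith)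
        nlinarith
      · rw [Set.indicator_of_notMem hxr]
        have : r < |x| := by
          rcases not_and_or.1 (Set.mem_Icc.not.1 hxr) with h | h
          · push_neg at h; rw [abs_of_neg (by linarith)]; linarith
          · push_neg at h
            rw [abs_of_pos (by linarith)]; linarith
        have := hVbig x this
        simp only [zero_sub]
        nlinarith [Real.exp_pos (b * V x + lam x)]
  have hIlow : ∫ x : ℝ, LB x ≤ ∫ x : ℝ, (V x - R) * Real.exp (b * V x + lam x) :=
    integral_mono hLBint hFint hpt
  have hLBval : ∫ x : ℝ, LB x = R * Real.exp (b * M - C) * L - R * Real.exp C * (2 * r) := by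
    rw [hLB]
    have e1 : ∫ x : ℝ, (Set.Icc s0 (s0 + L)).indicator
        (fun _ => R * Real.exp (b * M - C)) x = L * (R * Real.exp (b * M - C)) := by
      rw [integral_indicator_const _ measurableSet_Icc, measureReal_def, Real.volume_Icc]
      have : s0 + L - s0 = L := by ring
      rw [this, ENNReal.toReal_ofReal hL0.le, smul_eq_mul]
    have e2 : ∫ x : ℝ, (Set.Icc (-r) r).indicator (fun _ => R * Real.exp C) x
        = (2 * r) * (R * Real.exp C) := by
      rw [integral_indicator_const _ measurableSet_Icc, measureReal_def, Real.volume_Icc]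
      have : r - (-r) = 2 * r := by ring
      rw [this, ENNReal.toReal_ofReal (by linarith), smul_eq_mul]
    rw [integral_sub i1 i2, e1, e2]
    ring
  have hC2 : Real.exp (2 * C) = Real.exp C * Real.exp C := by
    rw [← Real.exp_add]; ring_nf
  have hqL : q * L = 2 * r * Real.exp (2 * C) := by
    rw [hq]; field_simp
  have key : Real.exp C * (2 * r) < Real.exp (b * M - C) * L := by
    rw [Real.exp_sub, div_mul_eq_mul_div, lt_div_iff₀ (Real.exp_pos C)]
    calc Real.exp C * (2 * r) * Real.exp C = 2 * r * Real.exp (2 * C) := by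
          rw [hC2]; ring
      _ = q * L := hqL.symm
      _ < Real.exp (b * M) * L := mul_lt_mul_of_pos_right hexpM hL0
  have hfin : 0 < R * Real.exp (b * M - C) * L - R * Real.exp C * (2 * r) := by
    nlinarith [mul_pos hR (sub_pos.2 key)]
  linarith [hIlow, hLBval.symm.le]

lemma neg_side {V lam : ℝ → ℝ} {C R : ℝ} (hV : IsOrlicz V) (hlamc : Continuous lam)
    (hC : ∀ x, |lam x| ≤ C) (hR : 0 < R) :
    ∃ a : ℝ, a ≤ -1 ∧ ∫ x : ℝ, (V x - R) * Real.exp (a * V x + lam x) < 0 := by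
  have hVnn := orlicz_nonneg hV
  have hVc : Continuous V := orlicz_cont hV
  -- choose d with V d < R/4
  obtain ⟨d, hd0, hd⟩ : ∃ d : ℝ, 0 < d ∧ V d < R / 4 := by
    have hcont : ContinuousAt V 0 := hVc.continuousAt
    rw [Metric.continuousAt_iff] at hcont
    obtain ⟨δ, hδ0, hδ⟩ := hcont (R / 4) (by positivity)
    refine ⟨δ / 2, by positivity, ?_⟩
    have := hδ (show dist (δ / 2) 0 < δ by
      rw [Real.dist_eq, sub_zero, abs_of_pos (by positivity)]; linarith)
    rw [Real.dist_eq, hV.2.2.1, sub_zero] at this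
    calc V (δ / 2) ≤ |V (δ / 2)| := le_abs_self _
      _ < R / 4 := this
  set ρ := V d with hρ
  have hρ0 : 0 < ρ := hV.2.2.2.1 d (ne_of_gt hd0)
  have hρR : ρ < R / 4 := hd
  -- V is at most ρ/2 on [-d/2, d/2], at most ρ on [-d,d], at least ρ outside (-d,d)
  have hVsmall : ∀ x : ℝ, |x| ≤ d / 2 → V x ≤ ρ / 2 := by
    intro x hx
    have h1 : V x ≤ V (d / 2) := orlicz_mono_abs hV (by
      rw [abs_of_pos (show (0:ℝ) < d / 2 by linarith)]; exact hx)
    have h2 : V (d / 2) ≤ (d / 2) / d * V d := orlicz_scale hV (by positivity) (by linarith) hd0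
    have h3 : (d / 2) / d = 1 / 2 := by field_simp; try ring
    rw [h3] at h2
    rw [hρ]; linarith
  have hVmid : ∀ x : ℝ, |x| ≤ d → V x ≤ ρ := by
    intro x hx
    rw [hρ]
    exact orlicz_mono_abs hV (by rw [abs_of_pos hd0]; exact hx)
  have hVout : ∀ x : ℝ, d ≤ |x| → ρ ≤ V x := by
    intro x hx
    rw [hρ]
    have : V d ≤ V |x| := orlicz_mono hV hd0.le hx
    rwa [← orlicz_abs hV x] at this
  -- K₁
  have intK : Integrable (fun x : ℝ => V x * Real.exp (-V x)) := by
    have := integrable_main (V := V) (lam := fun _ => (0:ℝ)) (C := 0) hV continuous_const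
      (fun x => by simp) 1 (show (-1 : ℝ) < 0 by norm_num)
    simpa using this
  set K₁ := ∫ x : ℝ, V x * Real.exp (-V x) with hK₁
  have hK₁0 : 0 ≤ K₁ :=
    integral_nonneg fun x => mul_nonneg (hVnn x) (Real.exp_pos _).le
  set q := (R * d / 2) * Real.exp (-C) / (Real.exp (C + ρ) * K₁ + 1) with hq
  have hden : 0 < Real.exp (C + ρ) * K₁ + 1 := by nlinarith [Real.exp_pos (C + ρ)]
  have hq0 : 0 < q := div_pos (by positivity) hden
  set a := min (-1 : ℝ) (Real.log q * (2 / ρ) - 1) with ha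
  have ha1 : a ≤ -1 := min_le_left _ _
  have ha0 : a < 0 := lt_of_le_of_lt ha1 (by norm_num)
  refine ⟨a, ha1, ?_⟩
  have haq : Real.exp (a * (ρ / 2)) < q := by
    have h1 : a ≤ Real.log q * (2 / ρ) - 1 := min_le_right _ _
    have h2 : a * (ρ / 2) ≤ (Real.log q * (2 / ρ) - 1) * (ρ / 2) :=
      mul_le_mul_of_nonneg_right h1 (by positivity)
    have h3 : (Real.log q * (2 / ρ) - 1) * (ρ / 2) = Real.log q - ρ / 2 := by
      field_simp
      try ring
    calc Real.exp (a * (ρ / 2)) ≤ Real.exp (Real.log q - ρ / 2) := by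
          apply Real.exp_le_exp.2; rw [← h3]; exact h2
      _ < Real.exp (Real.log q) := Real.exp_lt_exp.2 (by linarith)
      _ = q := Real.exp_log hq0
  -- upper bound function
  set J := Set.Icc (-(d / 2)) (d / 2) with hJ
  set T : ℝ → ℝ := fun x => Real.exp (C + ρ) * Real.exp (a * ρ) * (V x * Real.exp (-V x))
    with hT
  set UB : ℝ → ℝ := fun x => T x
    - J.indicator (fun _ => (R / 2) * Real.exp (a * (ρ / 2) - C)) x with hUB
  have iT : Integrable T := intK.const_mul _
  have iJ : Integrable (J.indicator (fun _ : ℝ => (R / 2) * Real.exp (a * (ρ / 2) - C))) := by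
    apply IntegrableOn.integrable_indicator _ measurableSet_Icc
    exact integrableOn_const measure_Icc_lt_top.ne
  have hUBint : Integrable UB := iT.sub iJ
  have hFint := integrable_expF (C := C) (R := R) hV hlamc hC ha0
  have hpt : ∀ x : ℝ, (V x - R) * Real.exp (a * V x + lam x) ≤ UB x := by
    intro x
    have hlamx := abs_le.1 (hC x)
    have hTnn : 0 ≤ T x := by
      rw [hT]
      exact mul_nonneg (by positivity) (mul_nonneg (hVnn x) (Real.exp_pos _).le)
    simp only [hUB]
    by_cases hxJ : x ∈ J
    · rw [Set.indicator_of_mem hxJ]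
      have hxd : |x| ≤ d / 2 := by
        rw [abs_le]; exact ⟨hxJ.1, hxJ.2⟩
      have hVx : V x ≤ ρ / 2 := hVsmall x hxd
      have hVxR : V x - R ≤ -(R / 2) := by linarith
      have hexp : Real.exp (a * (ρ / 2) - C) ≤ Real.exp (a * V x + lam x) := by
        apply Real.exp_le_exp.2
        have : a * (ρ / 2) ≤ a * V x := mul_le_mul_of_nonpos_left hVx ha0.le
        linarith
      have step1 : (V x - R) * Real.exp (a * V x + lam x)
          ≤ -(R / 2) * Real.exp (a * V x + lam x) :=
        mul_le_mul_of_nonneg_right hVxR (Real.exp_pos _).le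
      have step2 : -(R / 2) * Real.exp (a * V x + lam x)
          ≤ -(R / 2) * Real.exp (a * (ρ / 2) - C) := by
        apply mul_le_mul_of_nonpos_left hexp (by linarith)
      have : -(R / 2) * Real.exp (a * (ρ / 2) - C)
          = -((R / 2) * Real.exp (a * (ρ / 2) - C)) := by ring
      linarith
    · rw [Set.indicator_of_notMem hxJ]
      rcases le_or_gt |x| d with hxd | hxd
      · -- middle region: integrand ≤ 0 ≤ T x
        have hVx : V x ≤ ρ := hVmid x hxd
        have : (V x - R) * Real.exp (a * V x + lam x) ≤ 0 :=
          mul_nonpos_of_nonpos_of_nonneg (by linarith) (Real.exp_pos _).le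
        simp only [sub_zero]
        linarith
      · -- outer region
        have hVx : ρ ≤ V x := hVout x hxd.le
        have e1 : Real.exp (a * V x + lam x) ≤ Real.exp (a * V x) * Real.exp C := by
          rw [← Real.exp_add]
          apply Real.exp_le_exp.2; linarith
        have e2 : Real.exp (a * V x) = Real.exp ((a + 1) * V x) * Real.exp (-V x) := by
          rw [← Real.exp_add]; ring_nf
        have e3 : Real.exp ((a + 1) * V x) ≤ Real.exp ((a + 1) * ρ) := by
          apply Real.exp_le_exp.2
          apply mul_le_mul_of_nonpos_left hVx (by linarith)
        have e4 : Real.exp (C + ρ) * Real.exp (a * ρ) = Real.exp ((a + 1) * ρ) * Real.exp C := by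
          rw [← Real.exp_add, ← Real.exp_add]; ring_nf
        have step1 : (V x - R) * Real.exp (a * V x + lam x)
            ≤ V x * Real.exp (a * V x + lam x) :=
          mul_le_mul_of_nonneg_right (by linarith) (Real.exp_pos _).le
        have step2 : V x * Real.exp (a * V x + lam x) ≤ V x * (Real.exp (a * V x) * Real.exp C) :=
          mul_le_mul_of_nonneg_left e1 (hVnn x)
        have step3 : V x * (Real.exp (a * V x) * Real.exp C)
            ≤ V x * (Real.exp ((a + 1) * ρ) * Real.exp (-V x) * Real.exp C) := by
          apply mul_le_mul_of_nonneg_left _ (hVnn x)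
          rw [e2]
          have := mul_le_mul_of_nonneg_right e3 (Real.exp_pos (-V x)).le
          exact mul_le_mul_of_nonneg_right this (Real.exp_pos C).le
        have : V x * (Real.exp ((a + 1) * ρ) * Real.exp (-V x) * Real.exp C) = T x := by
          rw [hT, e4]; ring
        simp only [sub_zero]
        linarith
  have hIup : ∫ x : ℝ, (V x - R) * Real.exp (a * V x + lam x) ≤ ∫ x : ℝ, UB x :=
    integral_mono hFint hUBint hpt
  have hUBval : ∫ x : ℝ, UB x
      = Real.exp (C + ρ) * Real.exp (a * ρ) * K₁
        - (R / 2) * Real.exp (a * (ρ / 2) - C) * d := by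
    simp only [hUB]
    have e1 : ∫ x : ℝ, T x = Real.exp (C + ρ) * Real.exp (a * ρ) * K₁ := by
      rw [hT, hK₁]
      exact integral_const_mul _ _
    have e2 : ∫ x : ℝ, J.indicator (fun _ => (R / 2) * Real.exp (a * (ρ / 2) - C)) x
        = d * ((R / 2) * Real.exp (a * (ρ / 2) - C)) := by
      rw [integral_indicator_const _ measurableSet_Icc, measureReal_def, Real.volume_Icc]
      have : d / 2 - -(d / 2) = d := by ring
      rw [this, ENNReal.toReal_ofReal hd0.le, smul_eq_mul]
    rw [integral_sub iT iJ, e1, e2]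
    ring
  -- final estimate
  have eρ : Real.exp (a * ρ) = Real.exp (a * (ρ / 2)) * Real.exp (a * (ρ / 2)) := by
    rw [← Real.exp_add]; ring_nf
  have eC : Real.exp (a * (ρ / 2) - C) = Real.exp (a * (ρ / 2)) * Real.exp (-C) := by
    rw [← Real.exp_add]; ring_nf
  have hqid : (Real.exp (C + ρ) * K₁ + 1) * q = (R * d / 2) * Real.exp (-C) := by
    rw [hq]; field_simp
  have key : Real.exp (C + ρ) * Real.exp (a * ρ) * K₁
      < (R / 2) * Real.exp (a * (ρ / 2) - C) * d := by
    have h1 : Real.exp (C + ρ) * Real.exp (a * ρ) * K₁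
        = (Real.exp (C + ρ) * K₁ * Real.exp (a * (ρ / 2))) * Real.exp (a * (ρ / 2)) := by
      rw [eρ]; ring
    have h2 : Real.exp (C + ρ) * K₁ * Real.exp (a * (ρ / 2))
        ≤ Real.exp (C + ρ) * K₁ * q := by
      apply mul_le_mul_of_nonneg_left haq.le (by positivity)
    have h3 : Real.exp (C + ρ) * K₁ * q < (Real.exp (C + ρ) * K₁ + 1) * q := by
      apply mul_lt_mul_of_pos_right _ hq0
      linarith
    have h4 : (Real.exp (C + ρ) * K₁ * Real.exp (a * (ρ / 2))) * Real.exp (a * (ρ / 2))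
        < ((Real.exp (C + ρ) * K₁ + 1) * q) * Real.exp (a * (ρ / 2)) := by
      apply mul_lt_mul_of_pos_right _ (Real.exp_pos _)
      exact lt_of_le_of_lt h2 h3
    rw [h1]
    calc (Real.exp (C + ρ) * K₁ * Real.exp (a * (ρ / 2))) * Real.exp (a * (ρ / 2))
        < ((Real.exp (C + ρ) * K₁ + 1) * q) * Real.exp (a * (ρ / 2)) := h4
      _ = (R * d / 2) * Real.exp (-C) * Real.exp (a * (ρ / 2)) := by rw [hqid]
      _ = (R / 2) * Real.exp (a * (ρ / 2) - C) * d := by rw [eC]; ring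
  linarith [hIup, hUBval]

/-- There is a unique `α(λ) < 0` with
`∫ V e^{α(λ)V + λ} = R ∫ e^{α(λ)V + λ}`, and the variance of `V` under the
corresponding Gibbs density is strictly positive and finite. -/
theorem stmt0 (V : ℝ → ℝ) (hV : IsOrlicz V) (R : ℝ) (hR : 0 < R)
    (lam : ℝ → ℝ) (hlamCont : Continuous lam) (hlamBdd : ∃ C : ℝ, ∀ x, |lam x| ≤ C) :
    ∃ α : ℝ, α < 0 ∧
      (∫ x : ℝ, V x * Real.exp (α * V x + lam x))
        = R * ∫ x : ℝ, Real.exp (α * V x + lam x) ∧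
      (∀ α' : ℝ, α' < 0 →
        (∫ x : ℝ, V x * Real.exp (α' * V x + lam x))
          = R * ∫ x : ℝ, Real.exp (α' * V x + lam x) → α' = α) ∧
      Integrable (fun x : ℝ => (V x) ^ 2 * Real.exp (α * V x + lam x - phiV V lam α)) ∧
      0 < (∫ x : ℝ, (V x) ^ 2 * Real.exp (α * V x + lam x - phiV V lam α))
            - (∫ x : ℝ, V x * Real.exp (α * V x + lam x - phiV V lam α)) ^ 2 := by
  classical
  obtain ⟨C, hC⟩ := hlamBdd
  have hVnn := orlicz_nonneg hV
  have hVc := orlicz_cont hV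
  obtain ⟨a, ha1, hFa⟩ := neg_side (C := C) hV hlamCont hC hR
  obtain ⟨b₀, hb₀, hbpos⟩ := pos_side (C := C) hV hlamCont hC hR
  set F : ℝ → ℝ := fun α => ∫ x : ℝ, (V x - R) * Real.exp (α * V x + lam x) with hF
  set b := max b₀ (a / 2) with hb
  have hbneg : b < 0 := max_lt hb₀ (by linarith)
  have hab : a < b := lt_of_lt_of_le (by linarith : a < a / 2) (le_max_right _ _)
  have hFb : 0 < F b := hbpos b (le_max_left _ _) hbneg
  have hconOn : ContinuousOn F (Set.Icc a b) := by
    intro x hx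
    exact (contF (C := C) R hV hlamCont hC
      (lt_of_le_of_lt hx.2 hbneg)).continuousWithinAt
  obtain ⟨α, hαmem, hFα⟩ := intermediate_value_Ioo hab.le hconOn
    (show (0:ℝ) ∈ Set.Ioo (F a) (F b) from ⟨hFa, hFb⟩)
  have hα0 : α < 0 := lt_trans hαmem.2 hbneg
  have hint0 := integrable_exp0 (C := C) hV hlamCont hC hα0
  have hint1 := integrable_exp1 (C := C) hV hlamCont hC hα0
  have hint2 : Integrable (fun x : ℝ => V x ^ 2 * Real.exp (α * V x + lam x)) :=
    integrable_main (C := C) hV hlamCont hC 2 hα0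
  have hN0pos : 0 < ∫ x : ℝ, Real.exp (α * V x + lam x) :=
    integral_pos_of_cont
      (Real.continuous_exp.comp ((continuous_const.mul hVc).add hlamCont))
      (fun x => (Real.exp_pos _).le) hint0 (x₀ := 0) (Real.exp_pos _)
  have hsplit : ∀ {β : ℝ}, β < 0 → (∫ x : ℝ, (V x - R) * Real.exp (β * V x + lam x))
      = (∫ x : ℝ, V x * Real.exp (β * V x + lam x))
        - R * ∫ x : ℝ, Real.exp (β * V x + lam x) := by
    intro β hβ
    have h1 := integrable_exp1 (C := C) hV hlamCont hC hβ
    have h0 := (integrable_exp0 (C := C) hV hlamCont hC hβ).const_mul R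
    have e : (fun x : ℝ => (V x - R) * Real.exp (β * V x + lam x))
        = fun x : ℝ => V x * Real.exp (β * V x + lam x) - R * Real.exp (β * V x + lam x) := by
      funext x; ring
    rw [e, integral_sub h1 h0, integral_const_mul]
  have heq : (∫ x : ℝ, V x * Real.exp (α * V x + lam x))
      = R * ∫ x : ℝ, Real.exp (α * V x + lam x) := by
    simp only [hF] at hFα
    rw [hsplit hα0] at hFα
    linarith
  have huniq : ∀ α' : ℝ, α' < 0 →
      (∫ x : ℝ, V x * Real.exp (α' * V x + lam x))
        = R * ∫ x : ℝ, Real.exp (α' * V x + lam x) → α' = α := by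
    intro α' hα' heq'
    by_contra hne
    rcases lt_or_gt_of_ne hne with hlt | hgt
    · have hcor := corr_strict (C := C) hV hlamCont hC hα' hα0 hlt
      rw [heq', heq] at hcor
      have h2 : R * (∫ x : ℝ, Real.exp (α' * V x + lam x))
            * (∫ x : ℝ, Real.exp (α * V x + lam x))
          = R * (∫ x : ℝ, Real.exp (α * V x + lam x))
            * (∫ x : ℝ, Real.exp (α' * V x + lam x)) := by ring
      linarith
    · have hcor := corr_strict (C := C) hV hlamCont hC hα0 hα' hgt
      rw [heq', heq] at hcor
      have h2 : R * (∫ x : ℝ, Real.exp (α' * V x + lam x))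
            * (∫ x : ℝ, Real.exp (α * V x + lam x))
          = R * (∫ x : ℝ, Real.exp (α * V x + lam x))
            * (∫ x : ℝ, Real.exp (α' * V x + lam x)) := by ring
      linarith
  have hexpφ : Real.exp (phiV V lam α) = ∫ x : ℝ, Real.exp (α * V x + lam x) :=
    Real.exp_log hN0pos
  have hfun2 : (fun x : ℝ => V x ^ 2 * Real.exp (α * V x + lam x - phiV V lam α))
      = fun x : ℝ => (V x ^ 2 * Real.exp (α * V x + lam x)) * (Real.exp (phiV V lam α))⁻¹ := by
    funext x; rw [Real.exp_sub]; ring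
  have hfun1 : (fun x : ℝ => V x * Real.exp (α * V x + lam x - phiV V lam α))
      = fun x : ℝ => (V x * Real.exp (α * V x + lam x)) * (Real.exp (phiV V lam α))⁻¹ := by
    funext x; rw [Real.exp_sub]; ring
  refine ⟨α, hα0, heq, huniq, ?_, ?_⟩
  · rw [hfun2]
    exact hint2.mul_const _
  · -- variance positivity
    have hintsq : Integrable (fun x : ℝ => (V x - R) ^ 2 * Real.exp (α * V x + lam x)) := by
      have h : Integrable (fun x : ℝ => V x ^ 2 * Real.exp (α * V x + lam x)
          - 2 * R * (V x * Real.exp (α * V x + lam x))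
          + R ^ 2 * Real.exp (α * V x + lam x)) :=
        (hint2.sub (hint1.const_mul (2 * R))).add (hint0.const_mul (R ^ 2))
      exact h.congr (Filter.Eventually.of_forall fun x => by ring)
    have hsqval : (∫ x : ℝ, (V x - R) ^ 2 * Real.exp (α * V x + lam x))
        = (∫ x : ℝ, V x ^ 2 * Real.exp (α * V x + lam x))
          - 2 * R * (∫ x : ℝ, V x * Real.exp (α * V x + lam x))
          + R ^ 2 * ∫ x : ℝ, Real.exp (α * V x + lam x) := by
      have e : (fun x : ℝ => (V x - R) ^ 2 * Real.exp (α * V x + lam x))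
          = fun x : ℝ => (V x ^ 2 * Real.exp (α * V x + lam x)
            - 2 * R * (V x * Real.exp (α * V x + lam x)))
            + R ^ 2 * Real.exp (α * V x + lam x) := by
        funext x; ring
      have iS : Integrable (fun x : ℝ => V x ^ 2 * Real.exp (α * V x + lam x)
          - 2 * R * (V x * Real.exp (α * V x + lam x))) := hint2.sub (hint1.const_mul (2 * R))
      rw [e, integral_add iS (hint0.const_mul (R ^ 2)),
        integral_sub hint2 (hint1.const_mul (2 * R)), integral_const_mul, integral_const_mul]
      try ring
    have hsqpos : 0 < ∫ x : ℝ, (V x - R) ^ 2 * Real.exp (α * V x + lam x) := by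
      apply integral_pos_of_cont
        (((hVc.sub continuous_const).pow 2).mul (Real.continuous_exp.comp
          ((continuous_const.mul hVc).add hlamCont)))
        (fun x => mul_nonneg (sq_nonneg _) (Real.exp_pos _).le) hintsq (x₀ := 0)
      have h0 : V 0 = 0 := hV.2.2.1
      show 0 < (V 0 - R) ^ 2 * Real.exp (α * V 0 + lam 0)
      rw [h0]
      have : (0 - R) ^ 2 > 0 := by nlinarith
      exact mul_pos this (Real.exp_pos _)
    have key : 0 < (∫ x : ℝ, V x ^ 2 * Real.exp (α * V x + lam x))
        - R ^ 2 * ∫ x : ℝ, Real.exp (α * V x + lam x) := by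
      nlinarith [hsqval, hsqpos, heq]
    rw [hfun2, hfun1, integral_mul_const, integral_mul_const, hexpφ, heq]
    have hN0 : (∫ x : ℝ, Real.exp (α * V x + lam x)) ≠ 0 := ne_of_gt hN0pos
    have hid : (∫ x : ℝ, V x ^ 2 * Real.exp (α * V x + lam x))
          * (∫ x : ℝ, Real.exp (α * V x + lam x))⁻¹
        - (R * (∫ x : ℝ, Real.exp (α * V x + lam x))
          * (∫ x : ℝ, Real.exp (α * V x + lam x))⁻¹) ^ 2
        = ((∫ x : ℝ, V x ^ 2 * Real.exp (α * V x + lam x))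
          - R ^ 2 * ∫ x : ℝ, Real.exp (α * V x + lam x))
          * (∫ x : ℝ, Real.exp (α * V x + lam x))⁻¹ := by
      rw [mul_assoc R, mul_inv_cancel₀ hN0, mul_one, sub_mul, mul_assoc (R ^ 2),
        mul_inv_cancel₀ hN0, mul_one]
    rw [hid]
    exact mul_pos key (inv_pos.2 hN0pos)
end
end

section
/- Let V: ℝ → [0,∞) be an Orlicz function, R ∈ (0,∞), and λ: ℝ → ℝ a bounded continuous function. Let α(λ) ∈ (-∞,0) be the unique real number with ∫_ℝ V(x) e^{α(λ)V(x)+λ(x)} dx = R · ∫_ℝ e^{α(λ)V(x)+λ(x)} dx. Then φ_V(α(λ),λ) − α(λ)R = inf_{α < 0} [ φ_V(α,λ) − αR ], i.e., α(λ) is the unique minimizer over (-∞,0) of the strictly convex function α ↦ φ_V(α,λ) − αR. -/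
open MeasureTheory Real Filter Topology ENNReal

noncomputable section

lemma integrable_exp_neg_mul_abs' {b : ℝ} (hb : 0 < b) :
    Integrable (fun x : ℝ => Real.exp (-b * |x|)) := by
  have h1 : IntegrableOn (fun x : ℝ => Real.exp (-b * |x|)) (Set.Ici 0) := by
    rw [integrableOn_Ici_iff_integrableOn_Ioi]
    exact (exp_neg_integrableOn_Ioi 0 hb).congr_fun
      (fun x hx => by rw [abs_of_pos hx]) measurableSet_Ioi
  have h2 : IntegrableOn (fun x : ℝ => Real.exp (-b * |x|)) (Set.Iic 0) := by
    rw [← (Measure.measurePreserving_neg (volume : Measure ℝ)).integrableOn_comp_preimage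
        (Homeomorph.neg ℝ).measurableEmbedding]
    simp only [Function.comp_def, abs_neg, Set.neg_preimage, Set.neg_Iic, neg_zero]
    exact h1
  rw [← integrableOn_univ, ← Set.Iic_union_Ici (a := (0 : ℝ))]
  exact h2.union h1

/-- `α(λ)` is the minimizer of `α ↦ φ_V(α,λ) - αR` over `(-∞, 0)`:
the minimum is attained at `α(λ)` (in particular the value there equals the infimum),
and `α(λ)` is the unique minimizer. -/
theorem stmt1 (V : ℝ → ℝ) (hV : IsOrlicz V) (R : ℝ) (hR : 0 < R)
    (lam : ℝ → ℝ) (hlamCont : Continuous lam) (hlamBdd : ∃ C : ℝ, ∀ x, |lam x| ≤ C)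
    (α : ℝ) (hα : α < 0)
    (hαeq : (∫ x : ℝ, V x * Real.exp (α * V x + lam x))
        = R * ∫ x : ℝ, Real.exp (α * V x + lam x)) :
    IsLeast ((fun β : ℝ => phiV V lam β - β * R) '' Set.Iio (0 : ℝ))
      (phiV V lam α - α * R) ∧
    ∀ β : ℝ, β < 0 → phiV V lam β - β * R = phiV V lam α - α * R → β = α := by
  obtain ⟨hVc, hsym, h0, hposV, hnn⟩ := hV
  obtain ⟨C, hC⟩ := hlamBdd
  have hContV : Continuous V := hVc.locallyLipschitz.continuous
  have hV1 : 0 < V 1 := hposV 1 one_ne_zero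
  -- lower bound on V
  have hlb : ∀ x : ℝ, V 1 * (|x| - 1) ≤ V x := by
    intro x
    rcases le_or_gt |x| 1 with h | h
    · have : V 1 * (|x| - 1) ≤ 0 := mul_nonpos_of_nonneg_of_nonpos (hnn 1) (by linarith)
      linarith [hnn x]
    · have hxpos : 0 < |x| := by linarith
      have hVax : V |x| = V x := by
        rcases abs_cases x with ⟨he, _⟩ | ⟨he, _⟩
        · rw [he]
        · rw [he, hsym]
      have hconv := hVc.2 (Set.mem_univ (|x| : ℝ)) (Set.mem_univ (0 : ℝ))
        (show (0:ℝ) ≤ 1 / |x| by positivity)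
        (show (0:ℝ) ≤ 1 - 1 / |x| by
          rw [sub_nonneg]; exact div_le_one_of_le₀ (by linarith) hxpos.le)
        (show 1 / |x| + (1 - 1 / |x|) = 1 by ring)
      simp only [smul_eq_mul, mul_zero, add_zero, h0] at hconv
      have h1 : (1 / |x|) * |x| = 1 := by field_simp
      rw [h1] at hconv
      -- hconv : V 1 ≤ 1/|x| * V |x|
      have h2 : V 1 * |x| ≤ V |x| := by
        have := mul_le_mul_of_nonneg_right hconv hxpos.le
        calc V 1 * |x| ≤ (1 / |x| * V |x|) * |x| := this
          _ = V |x| := by field_simp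
      nlinarith [hnn 1]
  -- integrability of exp(β V + lam) for β < 0
  have hcont : ∀ β : ℝ, Continuous (fun x => Real.exp (β * V x + lam x)) := fun β =>
    Real.continuous_exp.comp (((continuous_const.mul hContV)).add hlamCont)
  have hInt : ∀ β : ℝ, β < 0 → Integrable (fun x : ℝ => Real.exp (β * V x + lam x)) := by
    intro β hβ
    have hb : 0 < -β * V 1 := by
      have := neg_pos.mpr hβ
      positivity
    refine Integrable.mono' (((integrable_exp_neg_mul_abs' hb).const_mul
      (Real.exp (C + β * V 1 * (-1))))) (hcont β).aestronglyMeasurable ?_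
    filter_upwards with x
    rw [Real.norm_eq_abs, abs_of_pos (Real.exp_pos _), ← Real.exp_add]
    apply Real.exp_le_exp.mpr
    have h1 : β * V x ≤ β * (V 1 * (|x| - 1)) :=
      mul_le_mul_of_nonpos_left (hlb x) hβ.le
    have h2 : lam x ≤ C := (abs_le.mp (hC x)).2
    nlinarith
  -- integrability of V * exp(β V + lam) for β < 0
  have hIntV : ∀ β : ℝ, β < 0 → Integrable (fun x : ℝ => V x * Real.exp (β * V x + lam x)) := by
    intro β hβ
    have hβ2 : β / 2 < 0 := by linarith
    refine Integrable.mono' (((hInt (β/2) hβ2).const_mul (2 / (-β))))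
      ((hContV.mul (hcont β)).aestronglyMeasurable) ?_
    filter_upwards with x
    rw [Real.norm_eq_abs, abs_of_nonneg (mul_nonneg (hnn x) (Real.exp_pos _).le)]
    have key : V x * Real.exp ((β/2) * V x) ≤ 2 / (-β) := by
      have h1 : (-(β/2)) * V x ≤ Real.exp ((-(β/2)) * V x) := by
        linarith [Real.add_one_le_exp ((-(β/2)) * V x), Real.exp_pos ((-(β/2)) * V x)]
      have h2 : 0 < Real.exp ((β/2) * V x) := Real.exp_pos _
      have h3 : Real.exp ((-(β/2)) * V x) * Real.exp ((β/2) * V x) = 1 := by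
        rw [← Real.exp_add]; simp
      have h4 := mul_le_mul_of_nonneg_right h1 h2.le
      rw [h3] at h4
      have hβpos : (0:ℝ) < -β := by linarith
      rw [le_div_iff₀ hβpos]
      nlinarith
    calc V x * Real.exp (β * V x + lam x)
        = (V x * Real.exp ((β/2) * V x)) * Real.exp ((β/2) * V x + lam x) := by
          rw [mul_assoc, ← Real.exp_add]; ring_nf
      _ ≤ (2 / (-β)) * Real.exp ((β/2) * V x + lam x) :=
          mul_le_mul_of_nonneg_right key (Real.exp_pos _).le
  -- positivity of partition functions
  have hZpos : ∀ β : ℝ, β < 0 → 0 < ∫ x : ℝ, Real.exp (β * V x + lam x) := fun β hβ =>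
    integral_exp_pos (hInt β hβ)
  -- the lower (tangent) function
  set L : ℝ → ℝ → ℝ := fun β x =>
    Real.exp ((β - α) * R) * ((1 + (β - α) * (V x - R)) * Real.exp (α * V x + lam x)) with hLdef
  have hpt : ∀ β : ℝ, ∀ x : ℝ, L β x ≤ Real.exp (β * V x + lam x) := by
    intro β x
    set t := (β - α) * (V x - R) with ht
    have h1 : 1 + t ≤ Real.exp t := by linarith [Real.add_one_le_exp t]
    calc L β x = (1 + t) * (Real.exp ((β - α) * R) * Real.exp (α * V x + lam x)) := by
          rw [hLdef]; ring
      _ ≤ Real.exp t * (Real.exp ((β - α) * R) * Real.exp (α * V x + lam x)) :=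
          mul_le_mul_of_nonneg_right h1 (by positivity)
      _ = Real.exp (t + ((β - α) * R + (α * V x + lam x))) := by
          rw [← Real.exp_add, ← Real.exp_add]
      _ = Real.exp (β * V x + lam x) := by congr 1; rw [ht]; ring
  have hLrw : ∀ β : ℝ, L β = fun x =>
      (Real.exp ((β - α) * R) * (1 - (β - α) * R)) * Real.exp (α * V x + lam x)
        + (Real.exp ((β - α) * R) * (β - α)) * (V x * Real.exp (α * V x + lam x)) := by
    intro β; funext x; rw [hLdef]; ring
  have hLint : ∀ β : ℝ, Integrable (L β) := by
    intro β
    rw [hLrw β]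
    exact ((hInt α hα).const_mul _).add ((hIntV α hα).const_mul _)
  have hLval : ∀ β : ℝ, (∫ x : ℝ, L β x)
      = Real.exp ((β - α) * R) * ∫ x : ℝ, Real.exp (α * V x + lam x) := by
    intro β
    simp only [hLrw β]
    rw [integral_add ((hInt α hα).const_mul _) ((hIntV α hα).const_mul _),
      integral_const_mul, integral_const_mul, hαeq]
    ring
  have hmain : ∀ β : ℝ, β < 0 →
      Real.exp ((β - α) * R) * (∫ x : ℝ, Real.exp (α * V x + lam x))
        ≤ ∫ x : ℝ, Real.exp (β * V x + lam x) := by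
    intro β hβ
    rw [← hLval β]
    exact integral_mono (hLint β) (hInt β hβ) (hpt β)
  have hineq : ∀ β : ℝ, β < 0 → phiV V lam α - α * R ≤ phiV V lam β - β * R := by
    intro β hβ
    have h1 := hmain β hβ
    have h2 : Real.log (Real.exp ((β - α) * R) * ∫ x : ℝ, Real.exp (α * V x + lam x))
        ≤ Real.log (∫ x : ℝ, Real.exp (β * V x + lam x)) :=
      Real.log_le_log (mul_pos (Real.exp_pos _) (hZpos α hα)) h1
    rw [Real.log_mul (Real.exp_ne_zero _) (hZpos α hα).ne', Real.log_exp] at h2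
    simp only [phiV]
    linarith
  constructor
  · constructor
    · exact ⟨α, hα, rfl⟩
    · rintro y ⟨β, hβ, rfl⟩
      exact hineq β hβ
  · -- uniqueness
    intro β hβ heq
    by_contra hne
    have hZβ : (∫ x : ℝ, Real.exp (β * V x + lam x))
        = Real.exp ((β - α) * R) * ∫ x : ℝ, Real.exp (α * V x + lam x) := by
      have h3 : Real.log (∫ x : ℝ, Real.exp (β * V x + lam x))
          = Real.log (Real.exp ((β - α) * R) * ∫ x : ℝ, Real.exp (α * V x + lam x)) := by
        rw [Real.log_mul (Real.exp_ne_zero _) (hZpos α hα).ne', Real.log_exp]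
        simp only [phiV] at heq
        linarith
      calc (∫ x : ℝ, Real.exp (β * V x + lam x))
          = Real.exp (Real.log (∫ x : ℝ, Real.exp (β * V x + lam x))) :=
            (Real.exp_log (hZpos β hβ)).symm
        _ = Real.exp (Real.log (Real.exp ((β - α) * R)
              * ∫ x : ℝ, Real.exp (α * V x + lam x))) := by rw [h3]
        _ = Real.exp ((β - α) * R) * ∫ x : ℝ, Real.exp (α * V x + lam x) :=
            Real.exp_log (mul_pos (Real.exp_pos _) (hZpos α hα))
    have hdiff0 : (∫ x : ℝ, (Real.exp (β * V x + lam x) - L β x)) = 0 := by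
      rw [integral_sub (hInt β hβ) (hLint β), hLval β, hZβ, sub_self]
    have hae : (fun x : ℝ => Real.exp (β * V x + lam x) - L β x) =ᵐ[volume] 0 :=
      (integral_eq_zero_iff_of_nonneg (fun x => sub_nonneg.2 (hpt β x))
        ((hInt β hβ).sub (hLint β))).1 hdiff0
    have hnull : volume {x : ℝ | Real.exp (β * V x + lam x) - L β x ≠ 0} = 0 := by
      have := hae
      rw [Filter.EventuallyEq, ae_iff] at this
      simpa using this
    have hU : IsOpen (V ⁻¹' Set.Iio R) := isOpen_Iio.preimage hContV
    have h0U : (0 : ℝ) ∈ V ⁻¹' Set.Iio R := by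
      simp only [Set.mem_preimage, Set.mem_Iio, h0]; exact hR
    have hposU : 0 < volume (V ⁻¹' Set.Iio R) := hU.measure_pos volume ⟨0, h0U⟩
    have hsub : V ⁻¹' Set.Iio R ⊆ {x : ℝ | Real.exp (β * V x + lam x) - L β x ≠ 0} := by
      intro x hx
      have hxR : V x ≠ R := ne_of_lt hx
      have ht0 : (β - α) * (V x - R) ≠ 0 :=
        mul_ne_zero (sub_ne_zero.2 hne) (sub_ne_zero.2 hxR)
      set t := (β - α) * (V x - R) with htdef
      have h1 : 1 + t < Real.exp t := by linarith [Real.add_one_lt_exp ht0]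
      have hstrict : L β x < Real.exp (β * V x + lam x) := by
        calc L β x = (1 + t) * (Real.exp ((β - α) * R) * Real.exp (α * V x + lam x)) := by
              rw [hLdef]; ring
          _ < Real.exp t * (Real.exp ((β - α) * R) * Real.exp (α * V x + lam x)) :=
              mul_lt_mul_of_pos_right h1 (by positivity)
          _ = Real.exp (t + ((β - α) * R + (α * V x + lam x))) := by
              rw [← Real.exp_add, ← Real.exp_add]
          _ = Real.exp (β * V x + lam x) := by congr 1; rw [htdef]; ring
      exact fun hcontra => absurd hcontra (sub_ne_zero.2 (ne_of_gt hstrict))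
    have : volume (V ⁻¹' Set.Iio R) = 0 :=
      le_antisymm (le_trans (measure_mono hsub) hnull.le) zero_le
    exact absurd this hposU.ne'
end
end

section
/- Let V: ℝ → [0,∞) be an Orlicz function. Define for α ∈ (-∞,0) the mean M(α) := (∫_ℝ V(x) e^{αV(x)} dx) / (∫_ℝ e^{αV(x)} dx). Then M(α) → ∞ as α → 0⁻ and M(α) → 0 as α → -∞. -/
open MeasureTheory Real Filter Topology ENNReal

set_option maxHeartbeats 1000000

noncomputable section

/-- Integrability of `exp (α * W x)` for `α < 0` and `W` of at-least-linear growth. -/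
lemma aux_integrable_exp {W : ℝ → ℝ} (hc : Continuous W) (h0 : ∀ x, 0 ≤ W x)
    {c : ℝ} (hcpos : 0 < c) (hlin : ∀ x : ℝ, 1 ≤ |x| → c * |x| ≤ W x)
    {α : ℝ} (hα : α < 0) : Integrable (fun x => Real.exp (α * W x)) := by
  set b : ℝ := -α * c with hb
  have hbpos : 0 < b := mul_pos (by linarith) hcpos
  have key : ∀ x : ℝ, Real.exp (α * W x) ≤ (2 + 8 / b ^ 2) * (1 + x ^ 2)⁻¹ := by
    intro x
    have hx2 : (0:ℝ) < 1 + x ^ 2 := by positivity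
    rcases le_or_gt (|x|) 1 with h | h
    · have h1 : Real.exp (α * W x) ≤ 1 := by
        rw [Real.exp_le_one_iff]
        exact mul_nonpos_of_nonpos_of_nonneg hα.le (h0 x)
      have h2 : 1 + x ^ 2 ≤ 2 := by nlinarith [abs_nonneg x, sq_abs x]
      have h3 : (1:ℝ) ≤ 2 * (1 + x ^ 2)⁻¹ := by
        rw [le_mul_inv_iff₀ hx2]; linarith
      have h4 : (0:ℝ) ≤ 8 / b ^ 2 * (1 + x ^ 2)⁻¹ := by positivity
      nlinarith
    · -- |x| ≥ 1 case
      have h1 : Real.exp (α * W x) ≤ Real.exp (-(b * |x|)) := by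
        apply Real.exp_le_exp.2
        have := hlin x h.le
        rw [hb]
        nlinarith
      -- exp (-(t)) ≤ 4 / t^2 for t ≥ 0
      set t : ℝ := b * |x| with ht
      have htpos : 0 < t := mul_pos hbpos (by linarith [abs_nonneg x])
      have h2 : Real.exp (-t) ≤ 4 / t ^ 2 := by
        have e1 : t / 2 ≤ Real.exp (t / 2) := by linarith [Real.add_one_le_exp (t / 2)]
        have e2 : t ^ 2 / 4 ≤ Real.exp t := by
          have emul : Real.exp (t / 2) * Real.exp (t / 2) = Real.exp t := by
            rw [← Real.exp_add]; ring_nf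
          nlinarith [htpos]
        rw [Real.exp_neg]
        have step : (Real.exp t)⁻¹ ≤ (t ^ 2 / 4)⁻¹ :=
          inv_anti₀ (by positivity) e2
        calc (Real.exp t)⁻¹ ≤ (t ^ 2 / 4)⁻¹ := step
          _ = 4 / t ^ 2 := by rw [inv_div]
      have h7 : 4 / t ^ 2 ≤ 8 / b ^ 2 * (1 + x ^ 2)⁻¹ := by
        have ht2 : t ^ 2 = b ^ 2 * x ^ 2 := by rw [ht, mul_pow, sq_abs]
        have hx1 : 1 ≤ x ^ 2 := by nlinarith [sq_abs x, abs_nonneg x]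
        rw [ht2, div_le_iff₀ (by positivity)]
        have expand : 8 / b ^ 2 * (1 + x ^ 2)⁻¹ * (b ^ 2 * x ^ 2)
            = 8 * ((1 + x ^ 2)⁻¹ * x ^ 2) := by
          field_simp
        rw [expand]
        have h8 : 1 / 2 ≤ (1 + x ^ 2)⁻¹ * x ^ 2 := by
          rw [inv_mul_eq_div, le_div_iff₀ hx2]; linarith
        linarith
      have := h1.trans (h2.trans h7)
      have h9 : (0:ℝ) ≤ 2 * (1 + x^2)⁻¹ := by positivity
      nlinarith
  have hint : Integrable (fun x : ℝ => (2 + 8 / b ^ 2) * (1 + x ^ 2)⁻¹) :=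
    integrable_inv_one_add_sq.const_mul _
  refine hint.mono' ?_ ?_
  · exact (Real.continuous_exp.comp (continuous_const.mul hc)).aestronglyMeasurable
  · filter_upwards with x
    rw [Real.norm_eq_abs, abs_of_nonneg (Real.exp_pos _).le]
    exact key x

lemma aux_integrable_mul_exp {W : ℝ → ℝ} (hc : Continuous W) (h0 : ∀ x, 0 ≤ W x)
    {c : ℝ} (hcpos : 0 < c) (hlin : ∀ x : ℝ, 1 ≤ |x| → c * |x| ≤ W x)
    {α : ℝ} (hα : α < 0) : Integrable (fun x => W x * Real.exp (α * W x)) := by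
  have h2 : α / 2 < 0 := by linarith
  have hint := (aux_integrable_exp hc h0 hcpos hlin h2).const_mul (2 / (-α))
  refine hint.mono' ((hc.mul (Real.continuous_exp.comp (continuous_const.mul hc))).aestronglyMeasurable) ?_
  filter_upwards with x
  rw [Real.norm_eq_abs, abs_of_nonneg (mul_nonneg (h0 x) (Real.exp_pos _).le)]
  have key : W x ≤ 2 / (-α) * Real.exp (-α / 2 * W x) := by
    have h1 : -α / 2 * W x ≤ Real.exp (-α / 2 * W x) := by
      linarith [Real.add_one_le_exp (-α / 2 * W x)]
    have hna : (0:ℝ) < -α := by linarith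
    rw [div_mul_eq_mul_div, le_div_iff₀ hna]
    nlinarith
  calc W x * Real.exp (α * W x) ≤ (2 / (-α) * Real.exp (-α / 2 * W x)) * Real.exp (α * W x) := by
        apply mul_le_mul_of_nonneg_right key (Real.exp_pos _).le
    _ = 2 / (-α) * Real.exp (α / 2 * W x) := by
        rw [mul_assoc, ← Real.exp_add]; ring_nf

/-- The Gibbs mean `M(α) = ∫ V e^{αV} / ∫ e^{αV}` tends to `∞` as `α → 0⁻`
and to `0` as `α → -∞`. -/
theorem stmt2 (V : ℝ → ℝ) (hV : IsOrlicz V) :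
    Tendsto (fun α : ℝ =>
        (∫ x : ℝ, V x * Real.exp (α * V x)) / ∫ x : ℝ, Real.exp (α * V x))
      (nhdsWithin 0 (Set.Iio (0 : ℝ))) atTop ∧
    Tendsto (fun α : ℝ =>
        (∫ x : ℝ, V x * Real.exp (α * V x)) / ∫ x : ℝ, Real.exp (α * V x))
      atBot (nhds 0) := by
  obtain ⟨hconv, hsym, h00, hposV, hnn⟩ := hV
  have hcont : Continuous V :=
    continuousOn_univ.mp (hconv.continuousOn isOpen_univ)
  set c := V 1 with hcdef
  have hc : 0 < c := hposV 1 one_ne_zero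
  have hscale : ∀ t y : ℝ, 0 ≤ t → t ≤ 1 → V (t * y) ≤ t * V y := by
    intro t y ht ht1
    have h := hconv.2 (Set.mem_univ y) (Set.mem_univ (0:ℝ)) ht
      (by linarith : (0:ℝ) ≤ 1 - t) (by ring)
    simpa [h00, smul_eq_mul] using h
  have habs : ∀ x : ℝ, V |x| = V x := by
    intro x
    rcases abs_cases x with ⟨h, _⟩ | ⟨h, _⟩
    · rw [h]
    · rw [h, hsym]
  have hmono : ∀ a b : ℝ, 0 ≤ a → a ≤ b → V a ≤ V b := by
    intro a b ha hab
    rcases eq_or_lt_of_le (ha.trans hab) with hb | hb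
    · have hb0 : b = 0 := hb.symm
      have ha0 : a = 0 := le_antisymm (hb0 ▸ hab) ha
      rw [ha0, hb0]
    · have h1 : V (a / b * b) ≤ a / b * V b :=
        hscale _ _ (div_nonneg ha hb.le) (by rw [div_le_one hb]; exact hab)
      rw [div_mul_cancel₀ a hb.ne'] at h1
      have h2 : a / b * V b ≤ V b :=
        mul_le_of_le_one_left (hnn b) (by rw [div_le_one hb]; exact hab)
      linarith
  have hlin : ∀ x : ℝ, 1 ≤ |x| → c * |x| ≤ V x := by
    intro x hx
    have hxpos : (0:ℝ) < |x| := by linarith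
    have h1 : V (1 / |x| * |x|) ≤ 1 / |x| * V |x| :=
      hscale _ _ (by positivity) (by rw [div_le_one hxpos]; exact hx)
    rw [one_div_mul_cancel hxpos.ne', habs, ← hcdef] at h1
    rw [← habs x]
    have h2 := mul_le_mul_of_nonneg_left h1 hxpos.le
    rw [← mul_assoc, mul_one_div_cancel hxpos.ne', one_mul] at h2
    rw [habs]
    nlinarith
  have hVsmall : ∀ y : ℝ, |y| ≤ 1 → V y ≤ |y| * c := by
    intro y hy
    have h := hscale |y| 1 (abs_nonneg y) hy
    rw [mul_one] at h
    rw [← habs y]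
    exact h
  have hZint : ∀ α : ℝ, α < 0 → Integrable fun x => Real.exp (α * V x) :=
    fun α hα => aux_integrable_exp hcont hnn hc hlin hα
  have hNint : ∀ α : ℝ, α < 0 → Integrable fun x => V x * Real.exp (α * V x) :=
    fun α hα => aux_integrable_mul_exp hcont hnn hc hlin hα
  have hZpos : ∀ α : ℝ, α < 0 → 0 < ∫ x : ℝ, Real.exp (α * V x) := by
    intro α hα
    rw [integral_pos_iff_support_of_nonneg (fun x => (Real.exp_pos _).le) (hZint α hα)]
    have hsupp : Function.support (fun x : ℝ => Real.exp (α * V x)) = Set.univ := by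
      ext x
      simp [Function.mem_support, (Real.exp_pos (α * V x)).ne']
    rw [hsupp, Real.volume_univ]
    exact ENNReal.zero_lt_top
  have hNnn : ∀ α : ℝ, 0 ≤ ∫ x : ℝ, V x * Real.exp (α * V x) :=
    fun α => integral_nonneg fun x => mul_nonneg (hnn x) (Real.exp_pos _).le
  -- generic lower bound for the partition function
  have hZlb : ∀ α T R : ℝ, α < 0 → 0 ≤ T → (∀ x : ℝ, |x| ≤ T → V x ≤ R) →
      Real.exp (α * R) * (2 * T) ≤ ∫ x : ℝ, Real.exp (α * V x) := by
    intro α T R hα hT hVR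
    have hmeas : MeasurableSet (Set.Icc (-T) T) := measurableSet_Icc
    have hind : Integrable ((Set.Icc (-T) T).indicator fun _ => Real.exp (α * R)) := by
      rw [integrable_indicator_iff hmeas]
      exact integrableOn_const (by rw [Real.volume_Icc]; exact ofReal_ne_top)
    have hle : ∀ x : ℝ, (Set.Icc (-T) T).indicator (fun _ => Real.exp (α * R)) x
        ≤ Real.exp (α * V x) := by
      intro x
      by_cases hx : x ∈ Set.Icc (-T) T
      · rw [Set.indicator_of_mem hx]
        apply Real.exp_le_exp.2
        have hxT : |x| ≤ T := abs_le.2 ⟨hx.1, hx.2⟩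
        nlinarith [hVR x hxT]
      · rw [Set.indicator_of_notMem hx]
        exact (Real.exp_pos _).le
    have h := integral_mono hind (hZint α hα) hle
    rwa [integral_indicator_const _ hmeas, measureReal_def, Real.volume_Icc,
      ENNReal.toReal_ofReal (by linarith), smul_eq_mul,
      show T - -T = 2 * T by ring, mul_comm] at h
  constructor
  · -- limit at 0⁻ is ∞
    rw [tendsto_atTop]
    intro b
    set K := max b 1 with hKdef
    have hK : 0 < K := lt_of_lt_of_le one_pos (le_max_right b 1)
    have hbK : b ≤ K := le_max_left b 1
    set S := {x : ℝ | V x < 2 * K} with hSdef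
    have hSmeas : MeasurableSet S := measurableSet_lt hcont.measurable measurable_const
    set T₀ : ℝ := max 1 (2 * K / c) with hT₀
    have hSsub : S ⊆ Set.Icc (-T₀) T₀ := by
      intro x hx
      by_contra hcon
      have hxT : T₀ < |x| := by
        rw [Set.mem_Icc, not_and_or, not_le, not_le] at hcon
        rcases hcon with h | h
        · calc T₀ < -x := by linarith
            _ ≤ |x| := neg_le_abs x
        · exact lt_of_lt_of_le h (le_abs_self x)
      have h1 : 1 ≤ |x| := le_trans (le_max_left _ _) hxT.le
      have h2 := hlin x h1
      have h3 : 2 * K < V x := by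
        have h4 : 2 * K / c ≤ T₀ := le_max_right _ _
        calc 2 * K = c * (2 * K / c) := by field_simp
          _ < c * |x| := by
              apply mul_lt_mul_of_pos_left (lt_of_le_of_lt h4 hxT) hc
          _ ≤ V x := h2
      have hx' : V x < 2 * K := hx
      linarith
    have hSfin : volume S < ⊤ :=
      lt_of_le_of_lt (measure_mono hSsub) (by rw [Real.volume_Icc]; exact ofReal_lt_top)
    set C := (volume S).toReal with hCdef
    have hCnn : 0 ≤ C := ENNReal.toReal_nonneg
    set T := 2 * C + 1 with hTdef
    have hT0 : (0:ℝ) ≤ T := by linarith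
    have hVR : ∀ x : ℝ, |x| ≤ T → V x ≤ V T := by
      intro x hx
      rw [← habs x]
      exact hmono _ _ (abs_nonneg x) hx
    have htend : Tendsto (fun α : ℝ => Real.exp (α * V T) * (2 * T)) (𝓝[<] (0:ℝ))
        (𝓝 (2 * T)) := by
      have hco : Continuous fun α : ℝ => Real.exp (α * V T) * (2 * T) :=
        (Real.continuous_exp.comp (continuous_id.mul continuous_const)).mul continuous_const
      have h0' := hco.tendsto 0
      simp only [zero_mul, Real.exp_zero, one_mul] at h0'
      exact h0'.mono_left nhdsWithin_le_nhds
    have hev1 : ∀ᶠ α in 𝓝[<] (0:ℝ), 2 * C < Real.exp (α * V T) * (2 * T) :=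
      htend.eventually_const_lt (by linarith)
    filter_upwards [hev1, self_mem_nhdsWithin] with α hα1 hα2
    have hα : α < 0 := hα2
    have hZC : 2 * C < ∫ x : ℝ, Real.exp (α * V x) :=
      lt_of_lt_of_le hα1 (hZlb α T (V T) hα hT0 hVR)
    have hindint : Integrable (S.indicator fun _ => (1:ℝ)) := by
      rw [integrable_indicator_iff hSmeas]
      exact integrableOn_const hSfin.ne
    have hptwise : ∀ x : ℝ,
        K * Real.exp (α * V x) - 2 * K * S.indicator (fun _ => (1:ℝ)) x
          ≤ (V x - K) * Real.exp (α * V x) := by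
      intro x
      by_cases hx : x ∈ S
      · rw [Set.indicator_of_mem hx]
        have hxV : V x < 2 * K := hx
        have he : Real.exp (α * V x) ≤ 1 :=
          Real.exp_le_one_iff.2 (mul_nonpos_of_nonpos_of_nonneg hα.le (hnn x))
        have h9 : (V x - 2 * K) * 1 ≤ (V x - 2 * K) * Real.exp (α * V x) :=
          mul_le_mul_of_nonpos_left he (by linarith)
        nlinarith [hnn x, Real.exp_pos (α * V x)]
      · rw [Set.indicator_of_notMem hx]
        have hxV : 2 * K ≤ V x := not_lt.1 hx
        have h9 : K * Real.exp (α * V x) ≤ (V x - K) * Real.exp (α * V x) :=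
          mul_le_mul_of_nonneg_right (by linarith) (Real.exp_pos _).le
        linarith
    have hLint : Integrable (fun x : ℝ =>
        K * Real.exp (α * V x) - 2 * K * S.indicator (fun _ => (1:ℝ)) x) :=
      ((hZint α hα).const_mul K).sub (hindint.const_mul (2 * K))
    have hRint : Integrable (fun x : ℝ => (V x - K) * Real.exp (α * V x)) := by
      have h := (hNint α hα).sub ((hZint α hα).const_mul K)
      simpa only [sub_mul, Pi.sub_def] using h
    have hInt := integral_mono hLint hRint hptwise
    rw [integral_sub ((hZint α hα).const_mul K) (hindint.const_mul (2 * K)),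
      integral_const_mul, integral_const_mul, integral_indicator_const _ hSmeas,
      measureReal_def, ← hCdef, smul_eq_mul, mul_one] at hInt
    have hRint' : (∫ x : ℝ, (V x - K) * Real.exp (α * V x))
        = (∫ x : ℝ, V x * Real.exp (α * V x)) - K * ∫ x : ℝ, Real.exp (α * V x) := by
      rw [← integral_const_mul, ← integral_sub (hNint α hα) ((hZint α hα).const_mul K)]
      congr 1
      ext x
      ring
    rw [hRint'] at hInt
    rw [le_div_iff₀ (lt_of_le_of_lt (by linarith) hZC : (0:ℝ) < ∫ x : ℝ, Real.exp (α * V x))]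
    nlinarith [mul_pos hK (sub_pos.2 hZC), hZC,
      mul_le_mul_of_nonneg_right hbK (le_of_lt (lt_of_le_of_lt (by linarith : (0:ℝ) ≤ 2*C) hZC))]
  · -- limit at -∞ is 0
    rw [Metric.tendsto_nhds]
    intro ε hε
    set δ := min 1 (ε / (4 * (c + 1))) with hδdef
    have hδpos : 0 < δ := lt_min one_pos (by positivity)
    have hδ1 : δ ≤ 1 := min_le_left _ _
    have hδsmall : ∀ x : ℝ, |x| ≤ δ → V x ≤ ε / 4 := by
      intro x hx
      have h1 : |x| ≤ 1 := hx.trans hδ1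
      calc V x ≤ |x| * c := hVsmall x h1
        _ ≤ δ * c := mul_le_mul_of_nonneg_right hx hc.le
        _ ≤ ε / (4 * (c + 1)) * c := mul_le_mul_of_nonneg_right (min_le_right _ _) hc.le
        _ ≤ ε / 4 := by
            rw [div_mul_eq_mul_div, div_le_div_iff₀ (by positivity) (by norm_num)]
            nlinarith
    set N₀ := ∫ x : ℝ, V x * Real.exp ((-1 : ℝ) * V x) with hN₀def
    have hN₀nn : 0 ≤ N₀ :=
      integral_nonneg fun x => mul_nonneg (hnn x) (Real.exp_pos _).le
    have htendexp : Tendsto (fun α : ℝ => N₀ / (2 * δ) * Real.exp (α * (ε / 4) + ε / 2))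
        atBot (𝓝 0) := by
      have h1 : Tendsto (fun α : ℝ => α * (ε / 4) + ε / 2) atBot atBot := by
        apply tendsto_atBot_add_const_right
        exact Tendsto.atBot_mul_const (by positivity) tendsto_id
      have h2 := Real.tendsto_exp_atBot.comp h1
      have h3 := h2.const_mul (N₀ / (2 * δ))
      simpa using h3
    have hev : ∀ᶠ α in atBot,
        N₀ / (2 * δ) * Real.exp (α * (ε / 4) + ε / 2) < ε / 4 :=
      htendexp.eventually_lt_const (by linarith)
    filter_upwards [hev, eventually_le_atBot (-1 : ℝ)] with α hα1 hα2
    have hα : α < 0 := lt_of_le_of_lt hα2 (by norm_num)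
    have hZp := hZpos α hα
    have hZlow : Real.exp (α * (ε / 4)) * (2 * δ) ≤ ∫ x : ℝ, Real.exp (α * V x) :=
      hZlb α δ (ε / 4) hα hδpos.le hδsmall
    have hptw : ∀ x : ℝ, V x * Real.exp (α * V x)
        ≤ ε / 2 * Real.exp (α * V x)
          + Real.exp ((α + 1) * (ε / 2)) * (V x * Real.exp ((-1 : ℝ) * V x)) := by
      intro x
      rcases le_or_gt (V x) (ε / 2) with h | h
      · have h2 : 0 ≤ Real.exp ((α + 1) * (ε / 2)) * (V x * Real.exp ((-1:ℝ) * V x)) :=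
          mul_nonneg (Real.exp_pos _).le (mul_nonneg (hnn x) (Real.exp_pos _).le)
        have h3 : V x * Real.exp (α * V x) ≤ ε / 2 * Real.exp (α * V x) :=
          mul_le_mul_of_nonneg_right h (Real.exp_pos _).le
        linarith
      · have hid : Real.exp (α * V x)
            = Real.exp ((-1:ℝ) * V x) * Real.exp ((α + 1) * V x) := by
          rw [← Real.exp_add]; ring_nf
        have h4 : Real.exp ((α + 1) * V x) ≤ Real.exp ((α + 1) * (ε / 2)) := by
          apply Real.exp_le_exp.2
          have hα1' : α + 1 ≤ 0 := by linarith
          nlinarith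
        have h5 : 0 ≤ ε / 2 * Real.exp (α * V x) := by positivity
        calc V x * Real.exp (α * V x)
            = V x * Real.exp ((-1:ℝ) * V x) * Real.exp ((α + 1) * V x) := by
              rw [hid]; ring
          _ ≤ V x * Real.exp ((-1:ℝ) * V x) * Real.exp ((α + 1) * (ε / 2)) := by
              apply mul_le_mul_of_nonneg_left h4
              exact mul_nonneg (hnn x) (Real.exp_pos _).le
          _ = Real.exp ((α + 1) * (ε / 2)) * (V x * Real.exp ((-1:ℝ) * V x)) := by ring
          _ ≤ ε / 2 * Real.exp (α * V x)
              + Real.exp ((α + 1) * (ε / 2)) * (V x * Real.exp ((-1:ℝ) * V x)) := by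
              linarith
    have hi1 : Integrable (fun x : ℝ => ε / 2 * Real.exp (α * V x)
        + Real.exp ((α + 1) * (ε / 2)) * (V x * Real.exp ((-1 : ℝ) * V x))) :=
      ((hZint α hα).const_mul (ε / 2)).add
        ((hNint (-1) (by norm_num)).const_mul (Real.exp ((α + 1) * (ε / 2))))
    have hNub : (∫ x : ℝ, V x * Real.exp (α * V x))
        ≤ ε / 2 * (∫ x : ℝ, Real.exp (α * V x)) + Real.exp ((α + 1) * (ε / 2)) * N₀ := by
      have h := integral_mono (hNint α hα) hi1 hptw
      rwa [integral_add ((hZint α hα).const_mul (ε / 2))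
        ((hNint (-1) (by norm_num)).const_mul _), integral_const_mul,
        integral_const_mul] at h
    have hMnn : 0 ≤ (∫ x : ℝ, V x * Real.exp (α * V x)) / ∫ x : ℝ, Real.exp (α * V x) :=
      div_nonneg (hNnn α) hZp.le
    rw [Real.dist_eq, sub_zero, abs_of_nonneg hMnn]
    have hB : 0 < Real.exp (α * (ε / 4)) * (2 * δ) := by positivity
    have key : (∫ x : ℝ, V x * Real.exp (α * V x)) / (∫ x : ℝ, Real.exp (α * V x))
        ≤ ε / 2 + Real.exp ((α + 1) * (ε / 2)) * N₀ / (Real.exp (α * (ε / 4)) * (2 * δ)) := by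
      calc (∫ x : ℝ, V x * Real.exp (α * V x)) / (∫ x : ℝ, Real.exp (α * V x))
          ≤ (ε / 2 * (∫ x : ℝ, Real.exp (α * V x)) + Real.exp ((α + 1) * (ε / 2)) * N₀)
              / (∫ x : ℝ, Real.exp (α * V x)) := by
            exact (div_le_div_iff_of_pos_right hZp).mpr hNub
        _ = ε / 2 + Real.exp ((α + 1) * (ε / 2)) * N₀ / (∫ x : ℝ, Real.exp (α * V x)) := by
            rw [add_div, mul_div_assoc, div_self hZp.ne', mul_one]
        _ ≤ ε / 2 + Real.exp ((α + 1) * (ε / 2)) * N₀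
              / (Real.exp (α * (ε / 4)) * (2 * δ)) := by
            have h6 : Real.exp ((α + 1) * (ε / 2)) * N₀ / (∫ x : ℝ, Real.exp (α * V x))
                ≤ Real.exp ((α + 1) * (ε / 2)) * N₀ / (Real.exp (α * (ε / 4)) * (2 * δ)) :=
              div_le_div_of_nonneg_left (by positivity) hB hZlow
            linarith
    have keq : Real.exp ((α + 1) * (ε / 2)) * N₀ / (Real.exp (α * (ε / 4)) * (2 * δ))
        = N₀ / (2 * δ) * Real.exp (α * (ε / 4) + ε / 2) := by
      rw [show (α + 1) * (ε / 2) = (α * (ε / 4) + ε / 2) + α * (ε / 4) by ring,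
        Real.exp_add]
      field_simp
    rw [keq] at key
    linarith
end
end

section
/- Let V₁, V₂: ℝ → [0,∞) be Orlicz functions with V₁(x)/V₂(x) → ∞ as |x| → ∞, and let M ∈ (0,∞). Then the set K_{V₁}^M := { ν a Borel probability measure on ℝ : m_{V₁}(ν) ≤ M } is sequentially compact in the following sense: every sequence (μ_n) in K_{V₁}^M has a subsequence (μ_{n_k}) and a limit μ ∈ K_{V₁}^M such that μ_{n_k} → μ weakly and m_{V₂}(μ_{n_k}) → m_{V₂}(μ); equivalently, K_{V₁}^M is compact with respect to the metric d_{V₂}(μ,ν) := d_w(μ,ν) + |m_{V₂}(μ) − m_{V₂}(ν)|, where d_w is any metric inducing weak convergence (e.g., the Lévy–Prokhorov metric). -/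
open MeasureTheory Real Filter Topology ENNReal

noncomputable section

def mV (V : ℝ → ℝ) (μ : Measure ℝ) : ℝ≥0∞ := ∫⁻ x, ENNReal.ofReal (V x) ∂μ

lemma sum_liminf_le {ι : Type*} (T : Finset ι) (f : ι → ℕ → ℝ≥0∞) :
    ∑ i ∈ T, liminf (f i) atTop ≤ liminf (fun k => ∑ i ∈ T, f i k) atTop := by
  classical
  refine Finset.induction_on T (by simp) ?_
  intro i T hi ih
  · rw [Finset.sum_insert hi]
    refine le_trans (add_le_add le_rfl ih) ?_
    have key : ∀ (u v : ℕ → ℝ≥0∞),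
        liminf u atTop + liminf v atTop ≤ liminf (fun k => u k + v k) atTop := by
      intro u v
      rw [liminf_eq_iSup_iInf_of_nat, liminf_eq_iSup_iInf_of_nat, liminf_eq_iSup_iInf_of_nat]
      rw [ENNReal.iSup_add, ]
      refine iSup_le fun n => ?_
      rw [ENNReal.add_iSup]
      refine iSup_le fun m => ?_
      refine le_trans ?_ (le_iSup _ (max n m))
      refine le_iInf₂ fun j hj => ?_
      exact add_le_add (iInf₂_le j (le_trans (le_max_left n m) hj))
        (iInf₂_le j (le_trans (le_max_right n m) hj))
    have := key (fun k => f i k) (fun k => ∑ j ∈ T, f j k)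
    refine le_trans this ?_
    simp [Finset.sum_insert hi]

namespace IsOrlicz
variable {V : ℝ → ℝ} (hV : IsOrlicz V)
include hV

lemma cont : Continuous V := by
  exact continuousOn_univ.mp (hV.1.continuousOn isOpen_univ)

lemma mono0 : ∀ a b : ℝ, 0 ≤ a → a ≤ b → V a ≤ V b := by
  intro a b ha hab
  rcases eq_or_lt_of_le (ha.trans hab) with h | hb
  · have : a = 0 := le_antisymm (hab.trans h.symm.le) ha
    rw [this, ← h]
  · have h := hV.1.2 (Set.mem_univ b) (Set.mem_univ 0)
      (show (0:ℝ) ≤ a / b from div_nonneg ha hb.le)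
      (show (0:ℝ) ≤ 1 - a / b by rw [sub_nonneg]; exact div_le_one_of_le₀ hab hb.le)
      (show a / b + (1 - a / b) = 1 by ring)
    simp only [smul_eq_mul, mul_zero, add_zero, hV.2.2.1] at h
    rw [div_mul_cancel₀ _ hb.ne'] at h
    calc V a ≤ a / b * V b := by simpa using h
    _ ≤ 1 * V b := mul_le_mul_of_nonneg_right (div_le_one_of_le₀ hab hb.le) (hV.2.2.2.2 b)
    _ = V b := one_mul _

lemma abs_eq (x : ℝ) : V |x| = V x := by
  rcases le_or_gt 0 x with h | h
  · rw [abs_of_nonneg h]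
  · rw [abs_of_neg h, hV.2.1]

lemma le_of_abs_le {r x : ℝ} (hr : 0 ≤ r) (h : r ≤ |x|) : V r ≤ V x := by
  rw [← hV.abs_eq x]
  exact hV.mono0 r |x| hr h

lemma exists_large (C : ℝ) : ∃ R : ℝ, 0 < R ∧ ∀ x, R ≤ |x| → C ≤ V x := by
  have h1 : 0 < V 1 := hV.2.2.2.1 1 one_ne_zero
  refine ⟨max 1 ((C + 1) / V 1), lt_of_lt_of_le one_pos (le_max_left _ _), fun x hx => ?_⟩
  have hx1 : (1:ℝ) ≤ |x| := le_trans (le_max_left _ _) hx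
  have hlin : |x| * V 1 ≤ V |x| := by
    have hxpos : (0:ℝ) < |x| := lt_of_lt_of_le one_pos hx1
    have h := hV.1.2 (Set.mem_univ |x|) (Set.mem_univ 0)
      (show (0:ℝ) ≤ 1 / |x| by positivity)
      (show (0:ℝ) ≤ 1 - 1 / |x| by rw [sub_nonneg]; exact div_le_one_of_le₀ hx1 hxpos.le)
      (show 1 / |x| + (1 - 1 / |x|) = 1 by ring)
    simp only [smul_eq_mul, mul_zero, add_zero, hV.2.2.1] at h
    rw [div_mul_cancel₀ _ hxpos.ne'] at h
    have h2 : V 1 ≤ |x|⁻¹ * V |x| := by simpa using h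
    have := mul_le_mul_of_nonneg_left h2 (abs_nonneg x)
    calc |x| * V 1 ≤ |x| * (|x|⁻¹ * V |x|) := this
    _ = V |x| := by field_simp
  have hCx : C + 1 ≤ |x| * V 1 := by
    have : (C + 1) / V 1 ≤ |x| := le_trans (le_max_right _ _) hx
    calc C + 1 = ((C + 1) / V 1) * V 1 := by field_simp
    _ ≤ |x| * V 1 := mul_le_mul_of_nonneg_right this h1.le
  have := hCx.trans hlin
  rw [hV.abs_eq] at this
  linarith

lemma markov (ν : Measure ℝ) {r : ℝ} (hr : 0 ≤ r) :
    ENNReal.ofReal (V r) * ν {x | r ≤ |x|} ≤ mV V ν := by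
  calc ENNReal.ofReal (V r) * ν {x | r ≤ |x|}
      ≤ ENNReal.ofReal (V r) * ν {x | ENNReal.ofReal (V r) ≤ ENNReal.ofReal (V x)} := by
        gcongr
        intro hx
        exact ENNReal.ofReal_le_ofReal (hV.le_of_abs_le hr hx)
    _ ≤ ∫⁻ x, ENNReal.ofReal (V x) ∂ν :=
        mul_meas_ge_le_lintegral₀ ((ENNReal.continuous_ofReal.comp hV.cont).measurable.aemeasurable) _

end IsOrlicz
/-- If `V₁/V₂ → ∞`, then `{ν : m_{V₁}(ν) ≤ M}` is sequentially compact for the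
topology of weak convergence together with convergence of `V₂`-moments (the
`d_{V₂}`-topology). -/
theorem stmt10 (V₁ V₂ : ℝ → ℝ) (hV₁ : IsOrlicz V₁) (hV₂ : IsOrlicz V₂)
    (hgrow : Tendsto (fun x : ℝ => V₁ x / V₂ x) (atTop ⊔ atBot) atTop)
    (M : ℝ) (hM : 0 < M)
    (μs : ℕ → ProbabilityMeasure ℝ)
    (hμs : ∀ n, mV V₁ (μs n : Measure ℝ) ≤ ENNReal.ofReal M) :
    ∃ (φ : ℕ → ℕ) (μ : ProbabilityMeasure ℝ), StrictMono φ ∧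
      mV V₁ (μ : Measure ℝ) ≤ ENNReal.ofReal M ∧
      mV V₂ (μ : Measure ℝ) ≠ ⊤ ∧
      Tendsto (fun k => μs (φ k)) atTop (nhds μ) ∧
      Tendsto (fun k => (mV V₂ (μs (φ k) : Measure ℝ)).toReal) atTop
        (nhds ((mV V₂ (μ : Measure ℝ)).toReal)) := by
  classical
  -- CDF values
  set Fn : ℕ → ℚ → ℝ := fun n q => ((μs n : Measure ℝ) (Set.Iic (q:ℝ))).toReal with hFn
  have hFnmem : ∀ n q, Fn n q ∈ Set.Icc (0:ℝ) 1 := by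
    intro n q
    refine ⟨ENNReal.toReal_nonneg, ?_⟩
    rw [show (1:ℝ) = (1:ℝ≥0∞).toReal from rfl]
    exact ENNReal.toReal_mono one_ne_top prob_le_one
  -- uniform tail bounds
  have htail : ∀ ε : ℝ, 0 < ε → ∃ R : ℚ, 0 < R ∧
      (∀ n, (μs n : Measure ℝ) {x : ℝ | (R:ℝ) ≤ |x|} ≤ ENNReal.ofReal ε) := by
    intro ε hε
    obtain ⟨R₀, hR₀pos, hR₀⟩ := hV₁.exists_large (M / ε)
    obtain ⟨R, hR⟩ := exists_rat_gt R₀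
    refine ⟨R, by exact_mod_cast hR₀pos.trans hR, fun n => ?_⟩
    have hsub : {x : ℝ | (R:ℝ) ≤ |x|} ⊆ {x : ℝ | R₀ ≤ |x|} :=
      fun x hx => le_trans hR.le hx
    refine le_trans (measure_mono hsub) ?_
    have hmk := hV₁.markov (μs n : Measure ℝ) hR₀pos.le
    have hVR : M / ε ≤ V₁ R₀ := hR₀ R₀ (le_abs_self R₀)
    have hVRpos : 0 < V₁ R₀ := lt_of_lt_of_le (by positivity) hVR
    have h2 : ENNReal.ofReal (M / ε) * (μs n : Measure ℝ) {x : ℝ | R₀ ≤ |x|}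
        ≤ ENNReal.ofReal M := by
      refine le_trans (mul_le_mul_left (ENNReal.ofReal_le_ofReal hVR) _) ?_
      exact le_trans hmk (hμs n)
    have hMε : (0:ℝ) < M / ε := by positivity
    rw [mul_comm] at h2
    rw [← ENNReal.le_div_iff_mul_le (Or.inl (ENNReal.ofReal_pos.mpr hMε).ne')
      (Or.inl ENNReal.ofReal_ne_top)] at h2
    refine h2.trans ?_
    rw [← ENNReal.ofReal_div_of_pos hMε]
    refine ENNReal.ofReal_le_ofReal ?_
    rw [div_div_eq_mul_div, mul_comm, mul_div_assoc, div_self hM.ne', mul_one]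
  -- subsequence extraction
  obtain ⟨gI, φ, hφ, hg⟩ := SeqCompactSpace.tendsto_subseq
    (fun n => (fun q => (⟨Fn n q, hFnmem n q⟩ : Set.Icc (0:ℝ) 1)))
  set G : ℚ → ℝ := fun q => (gI q : ℝ) with hG
  have hGconv : ∀ q, Tendsto (fun k => Fn (φ k) q) atTop (𝓝 (G q)) := by
    intro q
    have := tendsto_pi_nhds.mp hg q
    exact ((continuous_subtype_val.tendsto _).comp this)
  have hG01 : ∀ q, G q ∈ Set.Icc (0:ℝ) 1 := fun q => (gI q).2
  have hGmono : Monotone G := by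
    intro p q hpq
    refine le_of_tendsto_of_tendsto' (hGconv p) (hGconv q) (fun k => ?_)
    exact ENNReal.toReal_mono (measure_ne_top _ _)
      (measure_mono (Set.Iic_subset_Iic.mpr (by exact_mod_cast hpq)))
  -- limit CDF
  set F : ℝ → ℝ := fun x => sInf (G '' {q : ℚ | x < (q:ℝ)}) with hFdef
  have hne : ∀ x : ℝ, (G '' {q : ℚ | x < (q:ℝ)}).Nonempty := by
    intro x
    obtain ⟨q, hq⟩ := exists_rat_gt x
    exact ⟨G q, q, hq, rfl⟩
  have hbdd : ∀ x : ℝ, BddBelow (G '' {q : ℚ | x < (q:ℝ)}) := by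
    intro x
    exact ⟨0, fun y ⟨q, _, hq⟩ => hq ▸ (hG01 q).1⟩
  have hF_le : ∀ (x : ℝ) (q : ℚ), x < (q:ℝ) → F x ≤ G q :=
    fun x q h => csInf_le (hbdd x) ⟨q, h, rfl⟩
  have hle_F : ∀ (p : ℚ) (x : ℝ), (p:ℝ) ≤ x → G p ≤ F x := by
    intro p x hpx
    refine le_csInf (hne x) ?_
    rintro y ⟨q, hq, rfl⟩
    exact hGmono (show p ≤ q by exact_mod_cast (hpx.trans_lt hq).le)
  have hFmono : Monotone F := by
    intro x y hxy
    exact csInf_le_csInf (hbdd x) (hne y)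
      (Set.image_mono (fun q hq => lt_of_le_of_lt hxy hq))
  have hF0 : ∀ x, 0 ≤ F x := fun x => le_csInf (hne x) (by rintro y ⟨q, _, rfl⟩; exact (hG01 q).1)
  have hF1 : ∀ x, F x ≤ 1 := by
    intro x
    obtain ⟨q, hq⟩ := exists_rat_gt x
    exact (hF_le x q hq).trans (hG01 q).2
  have hFrc : ∀ x, ContinuousWithinAt F (Set.Ici x) x := by
    intro x
    rw [ContinuousWithinAt]
    refine tendsto_order.2 ⟨fun a ha => ?_, fun b hb => ?_⟩
    · filter_upwards [self_mem_nhdsWithin] with y hy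
      exact lt_of_lt_of_le ha (hFmono hy)
    · obtain ⟨y, ⟨q, hxq, rfl⟩, hyb⟩ := exists_lt_of_csInf_lt (hne x) hb
      filter_upwards [mem_nhdsWithin_of_mem_nhds (Iio_mem_nhds hxq)] with z hz
      exact lt_of_le_of_lt (hF_le z q hz) hyb
  have hGR : ∀ ε : ℝ, 0 < ε → ∃ R : ℚ, 0 < R ∧ G (-R) ≤ ε ∧ 1 - ε ≤ G R := by
    intro ε hε
    obtain ⟨R, hRpos, hR⟩ := htail ε hε
    refine ⟨R, hRpos, ?_, ?_⟩
    · refine le_of_tendsto (hGconv (-R)) (Eventually.of_forall fun k => ?_)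
      have hsub : Set.Iic ((-R : ℚ) : ℝ) ⊆ {x : ℝ | (R:ℝ) ≤ |x|} := by
        intro x hx
        simp only [Set.mem_Iic, Rat.cast_neg] at hx
        simp only [Set.mem_setOf_eq]
        have hRR : (0:ℝ) < (R:ℝ) := by exact_mod_cast hRpos
        rw [abs_of_nonpos (by linarith)]
        linarith
      have := le_trans (measure_mono hsub) (hR (φ k))
      exact ENNReal.toReal_le_of_le_ofReal hε.le this
    · refine ge_of_tendsto (hGconv R) (Eventually.of_forall fun k => ?_)
      have hcompl := measure_add_measure_compl (μ := (μs (φ k) : Measure ℝ))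
        (measurableSet_Iic (a := (R:ℝ)))
      rw [Set.compl_Iic] at hcompl
      have hsub : Set.Ioi ((R : ℚ) : ℝ) ⊆ {x : ℝ | (R:ℝ) ≤ |x|} := by
        intro x hx
        simp only [Set.mem_Ioi] at hx
        exact le_trans hx.le (le_abs_self x)
      have htb := le_trans (measure_mono hsub) (hR (φ k))
      have h1 : ((μs (φ k) : Measure ℝ) (Set.Iic (R:ℝ))).toReal
          + ((μs (φ k) : Measure ℝ) (Set.Ioi (R:ℝ))).toReal = 1 := by
        rw [← ENNReal.toReal_add (measure_ne_top _ _) (measure_ne_top _ _), hcompl]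
        simp
      have h2 : ((μs (φ k) : Measure ℝ) (Set.Ioi (R:ℝ))).toReal ≤ ε :=
        ENNReal.toReal_le_of_le_ofReal hε.le htb
      simp only [hFn]
      linarith
  have hFtop : Tendsto F atTop (𝓝 1) := by
    refine tendsto_order.2 ⟨fun a ha => ?_, fun b hb => ?_⟩
    · obtain ⟨R, hRpos, _, hGR2⟩ := hGR ((1 - a) / 2) (by linarith)
      filter_upwards [eventually_ge_atTop ((R:ℚ):ℝ)] with x hx
      have := le_trans hGR2 (hle_F R x hx)
      linarith
    · filter_upwards [] with x
      exact lt_of_le_of_lt (hF1 x) hb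
  have hFbot : Tendsto F atBot (𝓝 0) := by
    refine tendsto_order.2 ⟨fun a ha => ?_, fun b hb => ?_⟩
    · filter_upwards [] with x
      exact lt_of_lt_of_le ha (hF0 x)
    · obtain ⟨R, hRpos, hGR1, _⟩ := hGR (b / 2) (by linarith)
      filter_upwards [eventually_lt_atBot ((-R : ℚ) : ℝ)] with x hx
      have := le_trans (hF_le x (-R) hx) hGR1
      linarith
  set S : StieltjesFunction ℝ := ⟨F, hFmono, hFrc⟩ with hS
  have hSF : ∀ x, S x = F x := fun _ => rfl
  have hprob : IsProbabilityMeasure S.measure := S.isProbabilityMeasure hFbot hFtop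
  set μ : ProbabilityMeasure ℝ := ⟨S.measure, hprob⟩ with hμdef
  have hμcoe : (μ : Measure ℝ) = S.measure := rfl
  -- limits of measures of rational Ioc intervals
  have hIoc : ∀ p q : ℚ, p ≤ q → Tendsto (fun k => (μs (φ k) : Measure ℝ) (Set.Ioc (p:ℝ) (q:ℝ)))
      atTop (𝓝 (ENNReal.ofReal (G q - G p))) := by
    intro p q hpq
    have hreal : Tendsto (fun k => Fn (φ k) q - Fn (φ k) p) atTop (𝓝 (G q - G p)) :=
      (hGconv q).sub (hGconv p)
    refine (ENNReal.tendsto_ofReal hreal).congr fun k => ?_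
    have hle : (μs (φ k) : Measure ℝ) (Set.Iic (p:ℝ)) ≤ (μs (φ k) : Measure ℝ) (Set.Iic (q:ℝ)) :=
      measure_mono (Set.Iic_subset_Iic.mpr (by exact_mod_cast hpq))
    have hIocEq : (μs (φ k) : Measure ℝ) (Set.Ioc (p:ℝ) (q:ℝ)) =
        (μs (φ k) : Measure ℝ) (Set.Iic (q:ℝ)) - (μs (φ k) : Measure ℝ) (Set.Iic (p:ℝ)) := by
      rw [← Set.Iic_sdiff_Iic]
      rw [measure_diff (Set.Iic_subset_Iic.mpr (by exact_mod_cast hpq))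
        measurableSet_Iic.nullMeasurableSet (measure_ne_top _ _)]
    rw [hIocEq, show Fn (φ k) q - Fn (φ k) p =
      ((μs (φ k) : Measure ℝ) (Set.Iic (q:ℝ)) - (μs (φ k) : Measure ℝ) (Set.Iic (p:ℝ))).toReal
      from (ENNReal.toReal_sub_of_le hle (measure_ne_top _ _)).symm,
      ENNReal.ofReal_toReal (ne_top_of_le_ne_top (measure_ne_top _ _) tsub_le_self)]
  -- liminf bound for open sets
  have key : ∀ U : Set ℝ, IsOpen U →
      S.measure U ≤ liminf (fun k => (μs (φ k) : Measure ℝ) U) atTop := by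
    have hcomp : ∀ T : Set ℝ, IsOpen T → T.OrdConnected →
        S.measure T ≤ liminf (fun k => (μs (φ k) : Measure ℝ) T) atTop := by
      intro T hT hTo
      have hKbound : ∀ K : Set ℝ, IsCompact K → K ⊆ T →
          S.measure K ≤ liminf (fun k => (μs (φ k) : Measure ℝ) T) atTop := by
        intro K hKc hKT
        rcases K.eq_empty_or_nonempty with rfl | hKne
        · simp
        set l := sInf K with hl
        set r := sSup K with hr
        have hlK : l ∈ K := hKc.sInf_mem hKne
        have hrK : r ∈ K := hKc.sSup_mem hKne
        have hlr : l ≤ r := csInf_le_csSup hKne hKc.bddBelow hKc.bddAbove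
        obtain ⟨δ₁, hδ₁pos, hδ₁⟩ := Metric.isOpen_iff.mp hT l (hKT hlK)
        obtain ⟨δ₂, hδ₂pos, hδ₂⟩ := Metric.isOpen_iff.mp hT r (hKT hrK)
        obtain ⟨p₂, hp₂1, hp₂2⟩ := exists_rat_btwn (show l - δ₁ < l by linarith)
        obtain ⟨p₁, hp₁1, hp₁2⟩ := exists_rat_btwn hp₂1
        obtain ⟨q₁, hq₁1, hq₁2⟩ := exists_rat_btwn (show r < r + δ₂ by linarith)
        obtain ⟨q₂, hq₂1, hq₂2⟩ := exists_rat_btwn hq₁2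
        have hp₁T : ((p₁:ℝ)) ∈ T := hδ₁ (by
          rw [Metric.mem_ball, Real.dist_eq, abs_lt]; constructor <;> linarith)
        have hq₂T : ((q₂:ℝ)) ∈ T := hδ₂ (by
          rw [Metric.mem_ball, Real.dist_eq, abs_lt]; constructor <;> linarith)
        have hIccT : Set.Icc ((p₁:ℝ)) ((q₂:ℝ)) ⊆ T := hTo.out hp₁T hq₂T
        have hKsub : K ⊆ Set.Ioc ((p₂:ℝ)) ((q₁:ℝ)) := by
          intro x hx
          exact ⟨lt_of_lt_of_le hp₂2 (csInf_le hKc.bddBelow hx),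
            le_trans (le_csSup hKc.bddAbove hx) hq₁1.le⟩
        have hpq : p₁ ≤ q₂ := by
          have : (p₁:ℝ) ≤ (q₂:ℝ) := by linarith
          exact_mod_cast this
        calc S.measure K ≤ S.measure (Set.Ioc ((p₂:ℝ)) ((q₁:ℝ))) := measure_mono hKsub
        _ = ENNReal.ofReal (F (q₁:ℝ) - F (p₂:ℝ)) := S.measure_Ioc _ _
        _ ≤ ENNReal.ofReal (G q₂ - G p₁) := by
            refine ENNReal.ofReal_le_ofReal ?_
            have h1 : F ((q₁:ℝ)) ≤ G q₂ := hF_le _ q₂ (by exact_mod_cast hq₂1)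
            have h2 : G p₁ ≤ F ((p₂:ℝ)) := hle_F p₁ _ (by exact_mod_cast hp₁2.le)
            linarith
        _ = liminf (fun k => (μs (φ k) : Measure ℝ) (Set.Ioc ((p₁:ℝ)) ((q₂:ℝ)))) atTop :=
            ((hIoc p₁ q₂ hpq).liminf_eq).symm
        _ ≤ liminf (fun k => (μs (φ k) : Measure ℝ) T) atTop := by
            refine liminf_le_liminf (Eventually.of_forall fun k => measure_mono ?_)
            exact fun x hx => hIccT ⟨hx.1.le, hx.2⟩
      refine ENNReal.le_of_forall_pos_le_add fun ε hε hlt => ?_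
      obtain ⟨K, hKT, hKc, hKlt⟩ := hT.measurableSet.exists_isCompact_lt_add
        (μ := S.measure) (measure_ne_top _ _) (ε := (ε:ℝ≥0∞)) (by exact_mod_cast hε.ne')
      exact le_trans hKlt.le (add_le_add (hKbound K hKc hKT) le_rfl)
    intro U hU
    set 𝒞 : Set (Set ℝ) := (connectedComponentIn U) '' U with h𝒞
    have hCopen : ∀ c ∈ 𝒞, IsOpen c := by
      rintro c ⟨x, hx, rfl⟩; exact hU.connectedComponentIn
    have hCne : ∀ c ∈ 𝒞, c.Nonempty := by
      rintro c ⟨x, hx, rfl⟩; exact ⟨x, mem_connectedComponentIn hx⟩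
    have hCord : ∀ c ∈ 𝒞, c.OrdConnected := by
      rintro c ⟨x, hx, rfl⟩; exact isPreconnected_connectedComponentIn.ordConnected
    have hdisj : 𝒞.Pairwise Disjoint := by
      rintro c₁ ⟨x, hx, rfl⟩ c₂ ⟨y, hy, rfl⟩ hne
      rw [Set.disjoint_left]
      intro z hz1 hz2
      exact hne ((connectedComponentIn_eq hz1).trans (connectedComponentIn_eq hz2).symm)
    have hcount : 𝒞.Countable :=
      Set.PairwiseDisjoint.countable_of_isOpen (s := fun c : Set ℝ => c) (a := 𝒞)
        hdisj hCopen hCne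
    have hUnion : ⋃₀ 𝒞 = U := by
      apply Set.Subset.antisymm
      · exact Set.sUnion_subset (by rintro c ⟨x, hx, rfl⟩; exact connectedComponentIn_subset _ _)
      · intro x hx
        exact ⟨connectedComponentIn U x, ⟨x, hx, rfl⟩, mem_connectedComponentIn hx⟩
    conv_lhs => rw [← hUnion]
    rw [measure_sUnion hcount hdisj (fun c hc => (hCopen c hc).measurableSet)]
    rw [ENNReal.tsum_eq_iSup_sum]
    refine iSup_le fun T => ?_
    calc ∑ c ∈ T, S.measure (c : Set ℝ)
        ≤ ∑ c ∈ T, liminf (fun k => (μs (φ k) : Measure ℝ) (c : Set ℝ)) atTop :=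
          Finset.sum_le_sum fun c _ => hcomp c (hCopen _ c.2) (hCord _ c.2)
      _ ≤ liminf (fun k => ∑ c ∈ T, (μs (φ k) : Measure ℝ) (c : Set ℝ)) atTop :=
          sum_liminf_le T _
      _ ≤ liminf (fun k => (μs (φ k) : Measure ℝ) U) atTop := by
          refine liminf_le_liminf (Eventually.of_forall fun k => ?_)
          rw [← measure_biUnion_finset (fun c₁ _ c₂ _ hne =>
            hdisj c₁.2 c₂.2 (fun e => hne (Subtype.ext e)))
            (fun c _ => (hCopen _ c.2).measurableSet)]
          refine measure_mono (Set.iUnion₂_subset fun c _ => ?_)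
          rw [← hUnion]
          exact Set.subset_sUnion_of_mem c.2
  -- weak convergence
  have hconv : Tendsto (fun k => μs (φ k)) atTop (𝓝 μ) := by
    apply MeasureTheory.tendsto_of_forall_isOpen_le_liminf
    intro Gs hGs
    have h8 := key Gs hGs
    have aux : (↑(liminf (fun k => μs (φ k) Gs) atTop) : ℝ≥0∞) =
        liminf (fun k => ((μs (φ k) Gs : NNReal) : ℝ≥0∞)) atTop := by
      refine Monotone.map_liminf_of_continuousAt (F := atTop) ENNReal.coe_mono
        (fun k => μs (φ k) Gs) ENNReal.continuous_coe.continuousAt ?_ ?_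
      · exact IsBoundedUnder.isCoboundedUnder_ge ⟨1, Filter.eventually_map.2
          (Eventually.of_forall fun k => ProbabilityMeasure.apply_le_one _ _)⟩
      · exact ⟨0, Filter.eventually_map.2 (Eventually.of_forall fun k => zero_le)⟩
    rw [← ENNReal.coe_le_coe, aux]
    simpa [ProbabilityMeasure.ennreal_coeFn_eq_coeFn_toMeasure, hμcoe] using h8
  -- V₁ moment bound for the limit
  have hm1 : mV V₁ (μ : Measure ℝ) ≤ ENNReal.ofReal M := by
    have h := lintegral_le_liminf_lintegral_of_forall_isOpen_measure_le_liminf_measure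
      hV₁.cont hV₁.2.2.2.2 key
    refine h.trans ?_
    refine le_trans (liminf_le_liminf (Eventually.of_forall (fun k => hμs (φ k)))) ?_
    simp [liminf_const]
  -- domination of V₂ by V₁
  have hdom : ∃ C : ℝ, 0 ≤ C ∧ ∀ x, V₂ x ≤ C + V₁ x := by
    have hev := hgrow.eventually_ge_atTop 1
    rw [eventually_sup] at hev
    obtain ⟨hev1, hev2⟩ := hev
    obtain ⟨a, ha⟩ := eventually_atTop.mp hev1
    obtain ⟨b, hb⟩ := eventually_atBot.mp hev2
    obtain ⟨C₀, hC₀⟩ := (isCompact_Icc (a := b) (b := a)).exists_bound_of_continuousOn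
      hV₂.cont.continuousOn
    refine ⟨max C₀ 0, le_max_right _ _, fun x => ?_⟩
    by_cases hx : x ∈ Set.Icc b a
    · have h1 := hC₀ x hx
      rw [Real.norm_eq_abs] at h1
      have h2 := le_abs_self (V₂ x)
      have h3 := hV₁.2.2.2.2 x
      have h4 := le_max_left C₀ (0:ℝ)
      linarith
    · have hVle : V₂ x ≤ V₁ x := by
        have h1 : 1 ≤ V₁ x / V₂ x := by
          rcases lt_or_ge x b with h | h
          · exact hb x h.le
          · have hax : a < x := by
              by_contra hax
              exact hx ⟨h, not_lt.mp hax⟩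
            exact ha x hax.le
        rcases lt_or_eq_of_le (hV₂.2.2.2.2 x) with hpos | heq
        · exact (one_le_div hpos).mp h1
        · rw [← heq]; exact hV₁.2.2.2.2 x
      have h4 := le_max_right C₀ (0:ℝ)
      linarith
  obtain ⟨C, hC0, hCd⟩ := hdom
  have hbnd : ∀ ν : Measure ℝ, mV V₁ ν ≤ ENNReal.ofReal M → ν Set.univ = 1 →
      mV V₂ ν ≤ ENNReal.ofReal C + ENNReal.ofReal M := by
    intro ν hν hν1
    calc mV V₂ ν ≤ ∫⁻ x, (ENNReal.ofReal C + ENNReal.ofReal (V₁ x)) ∂ν := by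
          refine lintegral_mono fun x => ?_
          exact le_trans (ENNReal.ofReal_le_ofReal (hCd x)) (ENNReal.ofReal_add_le)
    _ = ENNReal.ofReal C * ν Set.univ + mV V₁ ν := by
          rw [lintegral_add_left measurable_const, lintegral_const]
          rfl
    _ ≤ ENNReal.ofReal C + ENNReal.ofReal M := by
          rw [hν1, mul_one]; exact add_le_add le_rfl hν
  have hm2 : mV V₂ (μ : Measure ℝ) ≠ ⊤ := by
    refine ne_top_of_le_ne_top (by finiteness) (hbnd _ hm1 ?_)
    exact measure_univ
  -- convergence of V₂ moments
  have hm2conv : Tendsto (fun k => (mV V₂ (μs (φ k) : Measure ℝ)).toReal) atTop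
      (𝓝 ((mV V₂ (μ : Measure ℝ)).toReal)) := by
    have hbnd2 : ∀ k, mV V₂ (μs (φ k) : Measure ℝ) ≤ ENNReal.ofReal C + ENNReal.ofReal M :=
      fun k => hbnd _ (hμs (φ k)) measure_univ
    have hfin2 : ∀ k, mV V₂ (μs (φ k) : Measure ℝ) ≠ ⊤ :=
      fun k => ne_top_of_le_ne_top (by finiteness) (hbnd2 k)
    rw [Metric.tendsto_atTop]
    intro ε hε
    have hc : 0 < ε / (3 * (M + 1)) := by positivity
    set c := ε / (3 * (M + 1)) with hcdef
    have hev := hgrow.eventually_ge_atTop (1 / c)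
    rw [eventually_sup] at hev
    obtain ⟨a, ha⟩ := eventually_atTop.mp hev.1
    obtain ⟨b, hb⟩ := eventually_atBot.mp hev.2
    set R := max 1 (max a (-b)) with hRdef
    have hR1 : (1:ℝ) ≤ R := le_max_left _ _
    have hVcut : ∀ x : ℝ, R ≤ |x| → V₂ x ≤ c * V₁ x := by
      intro x hx
      have h1 : 1 / c ≤ V₁ x / V₂ x := by
        rcases le_total 0 x with h0 | h0
        · rw [abs_of_nonneg h0] at hx
          exact ha x (le_trans (le_trans (le_max_left a (-b)) (le_max_right 1 _)) hx)
        · rw [abs_of_nonpos h0] at hx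
          refine hb x ?_
          have hmb : -b ≤ R := le_trans (le_max_right a (-b)) (le_max_right 1 _)
          linarith
      rcases lt_or_eq_of_le (hV₂.2.2.2.2 x) with hpos | heq
      · have h2 : (1 / c) * V₂ x ≤ V₁ x := (le_div_iff₀ hpos).mp h1
        have h3 := mul_le_mul_of_nonneg_left h2 hc.le
        calc V₂ x = c * ((1 / c) * V₂ x) := by field_simp
        _ ≤ c * V₁ x := h3
      · rw [← heq]
        exact mul_nonneg hc.le (hV₁.2.2.2.2 x)
    set χ : ℝ → ℝ := fun x => min 1 (max 0 (R + 1 - |x|)) with hχdef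
    have hχcont : Continuous χ :=
      continuous_const.min (continuous_const.max (continuous_const.sub continuous_abs))
    have hχ01 : ∀ x, 0 ≤ χ x ∧ χ x ≤ 1 :=
      fun x => ⟨le_min zero_le_one (le_max_left _ _), min_le_left _ _⟩
    have hχ1 : ∀ x, |x| ≤ R → χ x = 1 := by
      intro x hx
      have h1 : (1:ℝ) ≤ R + 1 - |x| := by linarith
      exact min_eq_left (le_trans h1 (le_max_right _ _))
    have hχ0 : ∀ x, R + 1 ≤ |x| → χ x = 0 := by
      intro x hx
      have h1 : R + 1 - |x| ≤ 0 := by linarith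
      have : max 0 (R + 1 - |x|) = 0 := max_eq_left h1
      rw [hχdef]
      simp only [this]
      exact min_eq_right zero_le_one
    set fR : ℝ → ℝ := fun x => V₂ x * χ x with hfRdef
    have hfRcont : Continuous fR := hV₂.cont.mul hχcont
    have hfRnn : ∀ x, 0 ≤ fR x := fun x => mul_nonneg (hV₂.2.2.2.2 x) (hχ01 x).1
    have hfRle : ∀ x, fR x ≤ V₂ x := by
      intro x
      calc V₂ x * χ x ≤ V₂ x * 1 := mul_le_mul_of_nonneg_left (hχ01 x).2 (hV₂.2.2.2.2 x)
      _ = V₂ x := mul_one _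
    obtain ⟨B₀, hB₀⟩ := (isCompact_Icc (a := -(R+1)) (b := R+1)).exists_bound_of_continuousOn
      hV₂.cont.continuousOn
    have hfRbd : ∀ x, ‖fR x‖ ≤ max B₀ 0 := by
      intro x
      rcases le_or_gt |x| (R+1) with hx | hx
      · rw [Real.norm_eq_abs, abs_of_nonneg (hfRnn x)]
        refine le_trans (hfRle x) (le_trans ?_ (le_max_left _ _))
        have h1 := hB₀ x (by
          rw [Set.mem_Icc]
          constructor
          · linarith [neg_abs_le x]
          · linarith [le_abs_self x])
        rw [Real.norm_eq_abs] at h1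
        exact (le_abs_self _).trans h1
      · have : fR x = 0 := by rw [hfRdef]; simp only [hχ0 x hx.le, mul_zero]
        rw [this]
        simp [le_max_right B₀ 0]
    set f : BoundedContinuousFunction ℝ ℝ :=
      BoundedContinuousFunction.ofNormedAddCommGroup fR hfRcont (max B₀ 0) hfRbd with hfdef
    set fN := BoundedContinuousFunction.comp _ Real.lipschitzWith_toNNReal f with hfNdef
    have hfNval : ∀ ν : Measure ℝ,
        ∫⁻ x, (fN x : ℝ≥0∞) ∂ν = ∫⁻ x, ENNReal.ofReal (fR x) ∂ν := by
      intro ν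
      refine lintegral_congr fun x => ?_
      rfl
    have hmeasfR : Measurable fun x => ENNReal.ofReal (fR x) :=
      (ENNReal.continuous_ofReal.comp hfRcont).measurable
    have hmeasV₁ : Measurable fun x => ENNReal.ofReal (V₁ x) :=
      (ENNReal.continuous_ofReal.comp hV₁.cont).measurable
    have hcM : c * M ≤ ε / 3 := by
      rw [hcdef, div_mul_eq_mul_div, div_le_div_iff₀ (by positivity) (by positivity)]
      nlinarith
    have hsplit : ∀ ν : Measure ℝ, ν Set.univ = 1 → mV V₁ ν ≤ ENNReal.ofReal M →
        ∫⁻ x, ENNReal.ofReal (fR x) ∂ν ≤ mV V₂ ν ∧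
        mV V₂ ν ≤ ∫⁻ x, ENNReal.ofReal (fR x) ∂ν + ENNReal.ofReal (ε/3) := by
      intro ν hν1 hνM
      constructor
      · exact lintegral_mono fun x => ENNReal.ofReal_le_ofReal (hfRle x)
      · have hpt : ∀ x, ENNReal.ofReal (V₂ x) ≤
            ENNReal.ofReal (fR x) + ENNReal.ofReal (c * V₁ x) := by
          intro x
          rcases le_or_gt |x| R with hx | hx
          · have heq : fR x = V₂ x := by rw [hfRdef]; simp only [hχ1 x hx, mul_one]
            rw [heq]
            exact self_le_add_right _ _
          · refine le_trans (ENNReal.ofReal_le_ofReal (hVcut x hx.le)) ?_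
            exact le_add_self
        calc mV V₂ ν ≤ ∫⁻ x, (ENNReal.ofReal (fR x) + ENNReal.ofReal (c * V₁ x)) ∂ν :=
            lintegral_mono hpt
        _ = ∫⁻ x, ENNReal.ofReal (fR x) ∂ν + ∫⁻ x, ENNReal.ofReal (c * V₁ x) ∂ν :=
            lintegral_add_left hmeasfR _
        _ ≤ ∫⁻ x, ENNReal.ofReal (fR x) ∂ν + ENNReal.ofReal (ε/3) := by
            refine add_le_add le_rfl ?_
            have heq2 : ∫⁻ x, ENNReal.ofReal (c * V₁ x) ∂ν = ENNReal.ofReal c * mV V₁ ν := by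
              rw [mV, ← lintegral_const_mul _ hmeasV₁]
              refine lintegral_congr fun x => ?_
              rw [ENNReal.ofReal_mul hc.le]
            rw [heq2]
            refine le_trans (mul_le_mul_right hνM _) ?_
            rw [← ENNReal.ofReal_mul hc.le]
            exact ENNReal.ofReal_le_ofReal hcM
    have hfRfink : ∀ k, ∫⁻ x, ENNReal.ofReal (fR x) ∂(μs (φ k) : Measure ℝ) ≠ ⊤ :=
      fun k => ne_top_of_le_ne_top (hfin2 k)
        (hsplit _ measure_univ (hμs (φ k))).1
    have hfRfinμ : ∫⁻ x, ENNReal.ofReal (fR x) ∂(μ : Measure ℝ) ≠ ⊤ :=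
      ne_top_of_le_ne_top hm2 (hsplit _ measure_univ hm1).1
    have hlim0 := ProbabilityMeasure.tendsto_iff_forall_lintegral_tendsto.mp hconv fN
    have hlim1 : Tendsto (fun k => ∫⁻ x, ENNReal.ofReal (fR x) ∂(μs (φ k) : Measure ℝ)) atTop
        (𝓝 (∫⁻ x, ENNReal.ofReal (fR x) ∂(μ : Measure ℝ))) := by
      refine Tendsto.congr (fun k => hfNval _) ?_
      rw [← hfNval]
      exact hlim0
    have hlim : Tendsto
        (fun k => (∫⁻ x, ENNReal.ofReal (fR x) ∂(μs (φ k) : Measure ℝ)).toReal) atTop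
        (𝓝 ((∫⁻ x, ENNReal.ofReal (fR x) ∂(μ : Measure ℝ)).toReal)) :=
      (ENNReal.tendsto_toReal hfRfinμ).comp hlim1
    obtain ⟨N, hN⟩ := Metric.tendsto_atTop.mp hlim (ε/3) (by positivity)
    refine ⟨N, fun k hk => ?_⟩
    have hNk := hN k hk
    rw [Real.dist_eq] at hNk ⊢
    set ak := (mV V₂ (μs (φ k) : Measure ℝ)).toReal
    set bk := (∫⁻ x, ENNReal.ofReal (fR x) ∂(μs (φ k) : Measure ℝ)).toReal
    set aμ := (mV V₂ (μ : Measure ℝ)).toReal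
    set bμ := (∫⁻ x, ENNReal.ofReal (fR x) ∂(μ : Measure ℝ)).toReal
    have h1k : bk ≤ ak := ENNReal.toReal_mono (hfin2 k) (hsplit _ measure_univ (hμs (φ k))).1
    have h2k : ak ≤ bk + ε/3 := by
      have := ENNReal.toReal_mono
        (by exact ENNReal.add_ne_top.mpr ⟨hfRfink k, ENNReal.ofReal_ne_top⟩)
        (hsplit _ measure_univ (hμs (φ k))).2
      rwa [ENNReal.toReal_add (hfRfink k) ENNReal.ofReal_ne_top,
        ENNReal.toReal_ofReal (by positivity)] at this
    have h1μ : bμ ≤ aμ := ENNReal.toReal_mono hm2 (hsplit _ measure_univ hm1).1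
    have h2μ : aμ ≤ bμ + ε/3 := by
      have := ENNReal.toReal_mono
        (by exact ENNReal.add_ne_top.mpr ⟨hfRfinμ, ENNReal.ofReal_ne_top⟩)
        (hsplit _ measure_univ hm1).2
      rwa [ENNReal.toReal_add hfRfinμ ENNReal.ofReal_ne_top,
        ENNReal.toReal_ofReal (by positivity)] at this
    rw [abs_lt] at hNk ⊢
    constructor <;> [linarith [hNk.1]; linarith [hNk.2]]
  exact ⟨φ, μ, hφ, hm1, hm2, hconv, hm2conv⟩
end
end

section
/- Let V₁, V₂: ℝ → [0,∞) be Orlicz functions with V₁(x)/V₂(x) → ∞ as |x| → ∞ and ∫_ℝ V₁(x) e^{αV₂(x)} dx < ∞ for all α ∈ (-∞,0). For R ∈ (0,∞) let α(R) ∈ (-∞,0) be the unique solution of m_{V₂}(μ_{V₂,α(R)}) = R. Then there exists R̄ ∈ (0,∞) with m_{V₁}(μ_{V₂,α(R̄)}) = 1 such that for all 0 < R ≤ R̄ one has m_{V₁}(μ_{V₂,α(R)}) ≤ 1. -/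
open MeasureTheory Real Filter Topology ENNReal

noncomputable section

namespace Orlicz
open Set
variable {V V₁ V₂ : ℝ → ℝ}

lemma cont (hV : IsOrlicz V) : Continuous V :=
  continuousOn_univ.1 (hV.1.continuousOn isOpen_univ)

/-- scaling: for `0 ≤ s ≤ t`, `V s ≤ (s/t) * V t`. -/
lemma scale (hV : IsOrlicz V) {s t : ℝ} (hs : 0 ≤ s) (hst : s ≤ t) :
    V s ≤ (s / t) * V t := by
  rcases eq_or_lt_of_le (hs.trans hst) with ht | ht
  · have : s = 0 := le_antisymm (hst.trans ht.symm.le) hs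
    simp [this, ← ht, hV.2.2.1]
  have hle : s/t ≤ 1 := div_le_one_of_le₀ hst ht.le
  have h := hV.1.2 (Set.mem_univ (0:ℝ)) (Set.mem_univ t)
    (show (0:ℝ) ≤ 1 - s/t by linarith)
    (show (0:ℝ) ≤ s/t by positivity) (show (1 - s/t) + s/t = 1 by ring)
  simp only [smul_eq_mul, mul_zero, zero_add, hV.2.2.1] at h
  calc V s = V ((s/t) * t) := by rw [div_mul_cancel₀ _ ht.ne']
    _ ≤ (s/t) * V t := by simpa using h

lemma mono (hV : IsOrlicz V) {s t : ℝ} (hs : 0 ≤ s) (hst : s ≤ t) : V s ≤ V t := by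
  refine (scale hV hs hst).trans ?_
  rcases eq_or_lt_of_le (hs.trans hst) with ht | ht
  · simp [← ht, hV.2.2.1]
  · nlinarith [hV.2.2.2.2 t, div_le_one_of_le₀ hst ht.le, div_nonneg hs ht.le]

lemma strictMono (hV : IsOrlicz V) {s t : ℝ} (hs : 0 ≤ s) (hst : s < t) : V s < V t := by
  have ht : 0 < t := hs.trans_lt hst
  have hVt : 0 < V t := hV.2.2.2.1 t ht.ne'
  refine (scale hV hs hst.le).trans_lt ?_
  have : s / t < 1 := (div_lt_one ht).2 hst
  nlinarith

lemma abs_eq (hV : IsOrlicz V) (x : ℝ) : V |x| = V x := by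
  rcases abs_cases x with ⟨h, _⟩ | ⟨h, _⟩
  · rw [h]
  · rw [h, hV.2.1]

lemma mono_abs (hV : IsOrlicz V) {x y : ℝ} (h : |y| ≤ |x|) : V y ≤ V x := by
  rw [← abs_eq hV y, ← abs_eq hV x]; exact mono hV (abs_nonneg y) h

/-- linear growth: `V 1 * x ≤ V x` for `x ≥ 1`. -/
lemma linear_growth (hV : IsOrlicz V) {x : ℝ} (hx : 1 ≤ x) : V 1 * x ≤ V x := by
  have hx0 : (0:ℝ) < x := lt_of_lt_of_le one_pos hx
  have h := scale hV zero_le_one hx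
  rw [div_mul_eq_mul_div, le_div_iff₀ hx0, one_mul] at h
  linarith [h]

lemma tendsto_atTop (hV : IsOrlicz V) : ∀ M : ℝ, ∃ K : ℝ, 1 ≤ K ∧ ∀ x : ℝ, K ≤ |x| → M ≤ V x := by
  intro M
  have h1 : 0 < V 1 := hV.2.2.2.1 1 one_ne_zero
  refine ⟨max 1 (M / V 1), le_max_left _ _, fun x hx => ?_⟩
  rw [← abs_eq hV x]
  have hx1 : 1 ≤ |x| := le_trans (le_max_left _ _) hx
  have := linear_growth hV hx1
  have h2 : M / V 1 ≤ |x| := le_trans (le_max_right _ _) hx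
  rw [div_le_iff₀ h1] at h2
  nlinarith


section Int
variable (hV₁ : IsOrlicz V₁) (hV₂ : IsOrlicz V₂)
  (hint : ∀ α : ℝ, α < 0 → Integrable (fun x : ℝ => V₁ x * Real.exp (α * V₂ x)))

include hV₁ hV₂ hint

lemma int_exp {β : ℝ} (hβ : β < 0) : Integrable (fun x : ℝ => Real.exp (β * V₂ x)) := by
  have h1 : 0 < V₁ 1 := hV₁.2.2.2.1 1 one_ne_zero
  have hbound : Integrable (fun x : ℝ =>
      (Icc (-1:ℝ) 1).indicator (fun _ => (1:ℝ)) x + (V₁ 1)⁻¹ * (V₁ x * Real.exp (β * V₂ x))) := by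
    have h0 : IntegrableOn (fun _ : ℝ => (1:ℝ)) (Icc (-1:ℝ) 1) := by
      refine integrableOn_const ?_
      exact measure_Icc_lt_top.ne
    exact (h0.integrable_indicator measurableSet_Icc).add ((hint β hβ).const_mul _)
  refine hbound.mono' ?_ ?_
  · exact ((Real.continuous_exp.comp ((continuous_const.mul (cont hV₂)))).aestronglyMeasurable)
  · refine Filter.Eventually.of_forall (fun x => ?_)
    rw [Real.norm_eq_abs, abs_of_pos (Real.exp_pos _)]
    by_cases hx : |x| ≤ 1
    · have : x ∈ Icc (-1:ℝ) 1 := abs_le.1 hx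
      rw [indicator_of_mem this]
      have : Real.exp (β * V₂ x) ≤ 1 :=
        Real.exp_le_one_iff.2 (mul_nonpos_of_nonpos_of_nonneg hβ.le (hV₂.2.2.2.2 x))
      have h2 : 0 ≤ (V₁ 1)⁻¹ * (V₁ x * Real.exp (β * V₂ x)) :=
        mul_nonneg (by positivity) (mul_nonneg (hV₁.2.2.2.2 x) (Real.exp_pos _).le)
      linarith
    · push_neg at hx
      have hV1x : V₁ 1 ≤ V₁ x := mono_abs hV₁ (by rw [abs_one]; exact hx.le)
      have hind : 0 ≤ (Icc (-1:ℝ) 1).indicator (fun _ => (1:ℝ)) x :=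
        indicator_nonneg (fun _ _ => zero_le_one) x
      have : Real.exp (β * V₂ x) ≤ (V₁ 1)⁻¹ * (V₁ x * Real.exp (β * V₂ x)) := by
        rw [← mul_assoc, le_mul_iff_one_le_left (Real.exp_pos _), inv_mul_eq_div, le_div_iff₀ h1]
        linarith
      linarith

lemma int_V₂exp {β : ℝ} (hβ : β < 0) :
    Integrable (fun x : ℝ => V₂ x * Real.exp (β * V₂ x)) := by
  have hβ2 : β / 2 < 0 := by linarith
  have hbound : Integrable (fun x : ℝ => (2 / (-β)) * Real.exp ((β/2) * V₂ x)) :=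
    (int_exp hV₁ hV₂ hint hβ2).const_mul _
  refine hbound.mono' ((((cont hV₂)).mul
    ((Real.continuous_exp.comp (continuous_const.mul (cont hV₂))))).aestronglyMeasurable) ?_
  refine Filter.Eventually.of_forall (fun x => ?_)
  have hVnn := hV₂.2.2.2.2 x
  rw [Real.norm_eq_abs, abs_of_nonneg (by positivity)]
  have hβ' : 0 < -β := by linarith
  set u := V₂ x with hu
  set E := Real.exp ((β/2) * u) with hE
  have hEpos : 0 < E := Real.exp_pos _
  have key : u * E ≤ 2 / (-β) := by
    have h2 : ((-β/2) * u + 1) * E ≤ Real.exp ((-β/2)*u) * E := by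
      nlinarith [Real.add_one_le_exp ((-β/2)*u), hEpos]
    have hzero : (-β/2)*u + (β/2)*u = 0 := by ring
    have h3 : Real.exp ((-β/2)*u) * E = 1 := by
      rw [hE, ← Real.exp_add, hzero, Real.exp_zero]
    rw [h3] at h2
    rw [div_eq_inv_mul, le_inv_mul_iff₀ hβ']
    nlinarith [hEpos]
  have hEE : Real.exp (β * u) = E * E := by
    rw [hE, ← Real.exp_add]; ring_nf
  calc u * Real.exp (β * u) = (u * E) * E := by rw [hEE]; ring
    _ ≤ (2 / (-β)) * E := mul_le_mul_of_nonneg_right key hEpos.le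
    _ = 2 / (-β) * Real.exp ((β/2) * u) := by rw [hE]

end Int

section Cheb
variable (W : ℝ → ℝ) {α α' : ℝ}
  (hiW : Integrable (fun x : ℝ => W x * Real.exp (α * V₂ x)))
  (hiW' : Integrable (fun x : ℝ => W x * Real.exp (α' * V₂ x)))
  (hiZ : Integrable (fun x : ℝ => Real.exp (α * V₂ x)))
  (hiZ' : Integrable (fun x : ℝ => Real.exp (α' * V₂ x)))

/-- the symmetrized integrand -/
noncomputable def G (W : ℝ → ℝ) (V₂ : ℝ → ℝ) (α α' : ℝ) (p : ℝ × ℝ) : ℝ :=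
  (W p.1 - W p.2) *
    (Real.exp (α' * V₂ p.1) * Real.exp (α * V₂ p.2)
      - Real.exp (α * V₂ p.1) * Real.exp (α' * V₂ p.2))

include hiW hiW' hiZ hiZ'

lemma G_int : Integrable (G W V₂ α α') (volume.prod volume) := by
  have e1 : G W V₂ α α' = fun p : ℝ × ℝ =>
      (fun x => W x * Real.exp (α' * V₂ x)) p.1 * (fun y => Real.exp (α * V₂ y)) p.2
      - (fun x => W x * Real.exp (α * V₂ x)) p.1 * (fun y => Real.exp (α' * V₂ y)) p.2
      - (fun x => Real.exp (α' * V₂ x)) p.1 * (fun y => W y * Real.exp (α * V₂ y)) p.2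
      + (fun x => Real.exp (α * V₂ x)) p.1 * (fun y => W y * Real.exp (α' * V₂ y)) p.2 := by
    funext p; simp only [G]; ring
  rw [e1]
  exact (((hiW'.mul_prod hiZ).sub (hiW.mul_prod hiZ')).sub (hiZ'.mul_prod hiW)).add
    (hiZ.mul_prod hiW')

lemma G_integral :
    ∫ p, G W V₂ α α' p ∂(volume.prod volume)
      = 2 * ((∫ x, W x * Real.exp (α' * V₂ x)) * (∫ x, Real.exp (α * V₂ x))
          - (∫ x, W x * Real.exp (α * V₂ x)) * (∫ x, Real.exp (α' * V₂ x))) := by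
  have e1 : G W V₂ α α' = fun p : ℝ × ℝ =>
      (fun x => W x * Real.exp (α' * V₂ x)) p.1 * (fun y => Real.exp (α * V₂ y)) p.2
      - (fun x => W x * Real.exp (α * V₂ x)) p.1 * (fun y => Real.exp (α' * V₂ y)) p.2
      - (fun x => Real.exp (α' * V₂ x)) p.1 * (fun y => W y * Real.exp (α * V₂ y)) p.2
      + (fun x => Real.exp (α * V₂ x)) p.1 * (fun y => W y * Real.exp (α' * V₂ y)) p.2 := by
    funext p; simp only [G]; ring
  have h1 : Integrable (fun p : ℝ × ℝ => W p.1 * Real.exp (α' * V₂ p.1) * Real.exp (α * V₂ p.2))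
      (volume.prod volume) := hiW'.mul_prod hiZ
  have h2 : Integrable (fun p : ℝ × ℝ => W p.1 * Real.exp (α * V₂ p.1) * Real.exp (α' * V₂ p.2))
      (volume.prod volume) := hiW.mul_prod hiZ'
  have h3 : Integrable (fun p : ℝ × ℝ => Real.exp (α' * V₂ p.1) * (W p.2 * Real.exp (α * V₂ p.2)))
      (volume.prod volume) := hiZ'.mul_prod hiW
  have h4 : Integrable (fun p : ℝ × ℝ => Real.exp (α * V₂ p.1) * (W p.2 * Real.exp (α' * V₂ p.2)))
      (volume.prod volume) := hiZ.mul_prod hiW'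
  have h12 : Integrable (fun p : ℝ × ℝ =>
      W p.1 * Real.exp (α' * V₂ p.1) * Real.exp (α * V₂ p.2)
        - W p.1 * Real.exp (α * V₂ p.1) * Real.exp (α' * V₂ p.2)) (volume.prod volume) :=
    h1.sub h2
  have h123 : Integrable (fun p : ℝ × ℝ =>
      W p.1 * Real.exp (α' * V₂ p.1) * Real.exp (α * V₂ p.2)
        - W p.1 * Real.exp (α * V₂ p.1) * Real.exp (α' * V₂ p.2)
        - Real.exp (α' * V₂ p.1) * (W p.2 * Real.exp (α * V₂ p.2))) (volume.prod volume) :=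
    h12.sub h3
  rw [e1]
  rw [integral_add h123 h4, integral_sub h12 h3, integral_sub h1 h2,
    integral_prod_mul (fun x => W x * Real.exp (α' * V₂ x)) (fun y => Real.exp (α * V₂ y)),
    integral_prod_mul (fun x => W x * Real.exp (α * V₂ x)) (fun y => Real.exp (α' * V₂ y)),
    integral_prod_mul (fun x => Real.exp (α' * V₂ x)) (fun y => W y * Real.exp (α * V₂ y)),
    integral_prod_mul (fun x => Real.exp (α * V₂ x)) (fun y => W y * Real.exp (α' * V₂ y))]
  ring

end Cheb

/-- pointwise nonnegativity of `G` when `W` is monotone in `|·|`. -/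
lemma G_nonneg (hV₂ : IsOrlicz V₂) {W : ℝ → ℝ}
    (hWmono : ∀ x y : ℝ, |y| ≤ |x| → W y ≤ W x) {α α' : ℝ} (hαα' : α ≤ α') (p : ℝ × ℝ) :
    0 ≤ G W V₂ α α' p := by
  obtain ⟨x, y⟩ := p
  have key : ∀ u v : ℝ, |v| ≤ |u| → 0 ≤ (W u - W v) *
      (Real.exp (α' * V₂ u) * Real.exp (α * V₂ v)
        - Real.exp (α * V₂ u) * Real.exp (α' * V₂ v)) := by
    intro u v huv
    have h1 : W v ≤ W u := hWmono u v huv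
    have h2 : V₂ v ≤ V₂ u := mono_abs hV₂ huv
    refine mul_nonneg (by linarith) ?_
    rw [← Real.exp_add, ← Real.exp_add, sub_nonneg, Real.exp_le_exp]
    nlinarith
  rcases le_total |y| |x| with h | h
  · exact key x y h
  · have := key y x h
    have e : G W V₂ α α' (x, y) =
        (W y - W x) * (Real.exp (α' * V₂ y) * Real.exp (α * V₂ x)
          - Real.exp (α * V₂ y) * Real.exp (α' * V₂ x)) := by
      simp only [G]; ring
    rw [e]; exact this

section Cheb2
variable (hV₂ : IsOrlicz V₂) {W : ℝ → ℝ} {α α' : ℝ}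
  (hiW : Integrable (fun x : ℝ => W x * Real.exp (α * V₂ x)))
  (hiW' : Integrable (fun x : ℝ => W x * Real.exp (α' * V₂ x)))
  (hiZ : Integrable (fun x : ℝ => Real.exp (α * V₂ x)))
  (hiZ' : Integrable (fun x : ℝ => Real.exp (α' * V₂ x)))

include hV₂ hiW hiW' hiZ hiZ'

lemma cheb_le (hWmono : ∀ x y : ℝ, |y| ≤ |x| → W y ≤ W x) (hαα' : α ≤ α') :
    (∫ x, W x * Real.exp (α * V₂ x)) * (∫ x, Real.exp (α' * V₂ x))
      ≤ (∫ x, W x * Real.exp (α' * V₂ x)) * (∫ x, Real.exp (α * V₂ x)) := by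
  have h0 : 0 ≤ ∫ p, G W V₂ α α' p ∂(volume.prod volume) :=
    integral_nonneg (G_nonneg hV₂ hWmono hαα')
  rw [G_integral W hiW hiW' hiZ hiZ'] at h0
  linarith

end Cheb2

lemma cheb_lt {α α' : ℝ} (hV₂' : IsOrlicz V₂)
    (hiW : Integrable (fun x : ℝ => V₂ x * Real.exp (α * V₂ x)))
    (hiW' : Integrable (fun x : ℝ => V₂ x * Real.exp (α' * V₂ x)))
    (hiZ : Integrable (fun x : ℝ => Real.exp (α * V₂ x)))
    (hiZ' : Integrable (fun x : ℝ => Real.exp (α' * V₂ x)))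
    (hαα' : α < α') :
    (∫ x, V₂ x * Real.exp (α * V₂ x)) * (∫ x, Real.exp (α' * V₂ x))
      < (∫ x, V₂ x * Real.exp (α' * V₂ x)) * (∫ x, Real.exp (α * V₂ x)) := by
  have hWmono : ∀ x y : ℝ, |y| ≤ |x| → V₂ y ≤ V₂ x := fun x y h => mono_abs hV₂' h
  have hnn : 0 ≤ G V₂ V₂ α α' := G_nonneg hV₂' hWmono hαα'.le
  have hint : Integrable (G V₂ V₂ α α') (volume.prod volume) :=
    G_int V₂ hiW hiW' hiZ hiZ'
  have hsupp : (Ioo (1:ℝ) 2 ×ˢ Ioo (0:ℝ) 1 : Set (ℝ × ℝ)) ⊆ Function.support (G V₂ V₂ α α') := by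
    rintro ⟨x, y⟩ ⟨hx, hy⟩
    have hyx : V₂ y < V₂ x := strictMono hV₂' hy.1.le (hy.2.trans hx.1)
    have hfac : Real.exp (α * V₂ x) * Real.exp (α' * V₂ y)
        < Real.exp (α' * V₂ x) * Real.exp (α * V₂ y) := by
      rw [← Real.exp_add, ← Real.exp_add, Real.exp_lt_exp]
      nlinarith
    have : 0 < G V₂ V₂ α α' (x, y) := by
      have : 0 < (V₂ x - V₂ y) := by linarith
      simp only [G]
      nlinarith
    exact ne_of_gt this
  have hpos : 0 < ∫ p, G V₂ V₂ α α' p ∂(volume.prod volume) := by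
    rw [integral_pos_iff_support_of_nonneg hnn hint]
    refine lt_of_lt_of_le ?_ (measure_mono hsupp)
    rw [Measure.prod_prod, Real.volume_Ioo, Real.volume_Ioo]
    norm_num
  rw [G_integral V₂ hiW hiW' hiZ hiZ'] at hpos
  linarith


/-- continuity of `α ↦ ∫ W x e^{α V₂ x}` at negative `α₀`. -/
lemma contAt (hV₂ : IsOrlicz V₂) {W : ℝ → ℝ} (hWc : Continuous W) (hWnn : ∀ x, 0 ≤ W x)
    (hinte : ∀ β : ℝ, β < 0 → Integrable (fun x : ℝ => W x * Real.exp (β * V₂ x)))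
    {α₀ : ℝ} (hα₀ : α₀ < 0) :
    ContinuousAt (fun α : ℝ => ∫ x : ℝ, W x * Real.exp (α * V₂ x)) α₀ := by
  have hhalf : α₀ < α₀ / 2 := by linarith
  refine continuousAt_of_dominated ?_ ?_ (hinte (α₀/2) (by linarith)) ?_
  · exact Eventually.of_forall fun α =>
      (hWc.mul (Real.continuous_exp.comp (continuous_const.mul (cont hV₂)))).aestronglyMeasurable
  · filter_upwards [Iio_mem_nhds hhalf] with α hα
    refine Eventually.of_forall fun x => ?_
    rw [Real.norm_eq_abs, abs_of_nonneg (mul_nonneg (hWnn x) (Real.exp_pos _).le)]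
    exact mul_le_mul_of_nonneg_left
      (Real.exp_le_exp.2 (mul_le_mul_of_nonneg_right hα.le (hV₂.2.2.2.2 x))) (hWnn x)
  · exact Eventually.of_forall fun x => Continuous.continuousAt
      (continuous_const.mul (Real.continuous_exp.comp ((continuous_id.mul continuous_const))))


lemma Zpos (hV₂ : IsOrlicz V₂) {β : ℝ}
    (hi : Integrable (fun x : ℝ => Real.exp (β * V₂ x))) :
    0 < ∫ x : ℝ, Real.exp (β * V₂ x) := by
  rw [integral_pos_iff_support_of_nonneg (fun x => (Real.exp_pos _).le) hi]
  have hsup : Function.support (fun x : ℝ => Real.exp (β * V₂ x)) = univ := by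
    ext x; simp [Real.exp_ne_zero]
  rw [hsup]
  simp

lemma N₂pos (hV₂ : IsOrlicz V₂) {β : ℝ}
    (hi : Integrable (fun x : ℝ => V₂ x * Real.exp (β * V₂ x))) :
    0 < ∫ x : ℝ, V₂ x * Real.exp (β * V₂ x) := by
  rw [integral_pos_iff_support_of_nonneg
    (fun x => mul_nonneg (hV₂.2.2.2.2 x) (Real.exp_pos _).le) hi]
  refine lt_of_lt_of_le ?_ (measure_mono (?_ : Ioo (0:ℝ) 1 ⊆ _))
  · rw [Real.volume_Ioo]; norm_num
  · intro x hx
    exact mul_ne_zero (ne_of_gt (hV₂.2.2.2.1 x (ne_of_gt hx.1))) (Real.exp_ne_zero _)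


lemma exists_small (hV₁ : IsOrlicz V₁) (hV₂ : IsOrlicz V₂)
    (hint : ∀ α : ℝ, α < 0 → Integrable (fun x : ℝ => V₁ x * Real.exp (α * V₂ x)))
    (hintZ : ∀ β : ℝ, β < 0 → Integrable (fun x : ℝ => Real.exp (β * V₂ x))) :
    ∃ a : ℝ, a < 0 ∧ (∫ x : ℝ, V₁ x * Real.exp (a * V₂ x)) ≤ ∫ x : ℝ, Real.exp (a * V₂ x) := by
  have hV₁nn := hV₁.2.2.2.2
  have hV₂nn := hV₂.2.2.2.2
  -- the small scale δ
  set δ : ℝ := min 1 (1 / (2 * (V₁ 1 + 1))) with hδdef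
  have hV₁1 : 0 ≤ V₁ 1 := hV₁nn 1
  have hδpos : 0 < δ := lt_min one_pos (by positivity)
  have hδ1 : δ ≤ 1 := min_le_left _ _
  have hVδ : V₁ δ ≤ 1 / 2 := by
    have h := scale hV₁ hδpos.le hδ1
    rw [div_one] at h
    have h2 : δ ≤ 1 / (2 * (V₁ 1 + 1)) := min_le_right _ _
    have h3 : δ * V₁ 1 ≤ (1 / (2 * (V₁ 1 + 1))) * V₁ 1 := mul_le_mul_of_nonneg_right h2 hV₁1
    have h4 : (1 / (2 * (V₁ 1 + 1))) * V₁ 1 ≤ 1 / 2 := by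
      rw [div_mul_eq_mul_div, div_le_div_iff₀ (by positivity) (by norm_num)]
      nlinarith
    linarith
  have hsmall : ∀ x : ℝ, |x| ≤ δ → V₁ x ≤ 1 / 2 := by
    intro x hx
    exact (mono_abs hV₁ (by rwa [abs_of_pos hδpos])).trans hVδ
  -- constants
  set c : ℝ := V₂ δ with hcdef
  set c' : ℝ := V₂ (δ / 2) with hc'def
  have hcc' : c' < c := strictMono hV₂ (by positivity) (by linarith)
  set K : ℝ := ∫ x : ℝ, V₁ x * Real.exp ((-1 : ℝ) * V₂ x) with hKdef
  have hKnn : 0 ≤ K :=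
    integral_nonneg (fun x => mul_nonneg (hV₁nn x) (Real.exp_pos _).le)
  set ε : ℝ := δ / (2 * (K * Real.exp c + 1)) with hεdef
  have hεpos : 0 < ε := by
    have : 0 < K * Real.exp c + 1 := by positivity
    positivity
  -- choose a very negative
  have htend : Tendsto (fun a : ℝ => Real.exp (a * (c - c'))) atBot (nhds 0) := by
    refine Real.tendsto_exp_atBot.comp ?_
    exact Tendsto.atBot_mul_const (by linarith) tendsto_id
  have hev : ∀ᶠ a in atBot, Real.exp (a * (c - c')) < ε :=
    htend.eventually_lt_const hεpos
  obtain ⟨a, ha2, ha1⟩ := (hev.and (eventually_le_atBot (-1 : ℝ))).exists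
  have ha0 : a < 0 := lt_of_le_of_lt ha1 (by norm_num)
  refine ⟨a, ha0, ?_⟩
  set s : Set ℝ := Icc (-δ) δ with hsdef
  have hs : MeasurableSet s := measurableSet_Icc
  have hintV : Integrable (fun x : ℝ => V₁ x * Real.exp (a * V₂ x)) := hint a ha0
  have hintZ' : Integrable (fun x : ℝ => Real.exp (a * V₂ x)) := hintZ a ha0
  have hZnn : 0 ≤ ∫ x : ℝ, Real.exp (a * V₂ x) :=
    integral_nonneg fun x => (Real.exp_pos _).le
  -- bound on s
  have bound1 : (∫ x in s, V₁ x * Real.exp (a * V₂ x))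
      ≤ (1/2) * ∫ x : ℝ, Real.exp (a * V₂ x) := by
    have step1 : (∫ x in s, V₁ x * Real.exp (a * V₂ x))
        ≤ ∫ x in s, (1/2) * Real.exp (a * V₂ x) := by
      refine setIntegral_mono_on hintV.integrableOn
        ((hintZ'.const_mul _).integrableOn) hs (fun x hx => ?_)
      exact mul_le_mul_of_nonneg_right (hsmall x (abs_le.2 ⟨hx.1, hx.2⟩)) (Real.exp_pos _).le
    have step2 : (∫ x in s, (1/2) * Real.exp (a * V₂ x))
        ≤ (1/2) * ∫ x : ℝ, Real.exp (a * V₂ x) := by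
      rw [integral_const_mul]
      refine mul_le_mul_of_nonneg_left ?_ (by norm_num)
      exact setIntegral_le_integral hintZ' (Eventually.of_forall fun x => (Real.exp_pos _).le)
    linarith
  -- bound off s
  have bound2 : (∫ x in sᶜ, V₁ x * Real.exp (a * V₂ x)) ≤ Real.exp ((a+1) * c) * K := by
    have step1 : (∫ x in sᶜ, V₁ x * Real.exp (a * V₂ x))
        ≤ ∫ x in sᶜ, Real.exp ((a+1) * c) * (V₁ x * Real.exp ((-1:ℝ) * V₂ x)) := by
      refine setIntegral_mono_on hintV.integrableOn
        (((hint (-1) (by norm_num)).const_mul _).integrableOn) hs.compl (fun x hx => ?_)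
      have hxs : δ < |x| := by
        simp only [hsdef, mem_compl_iff, mem_Icc, not_and_or, not_le] at hx
        rcases hx with h | h
        · rw [abs_of_neg (by linarith)]; linarith
        · rw [abs_of_pos (by linarith)]; linarith
      have hV₂x : c ≤ V₂ x := by
        rw [hcdef]
        exact mono_abs hV₂ (by rw [abs_of_pos hδpos]; exact hxs.le)
      have hexp : Real.exp (a * V₂ x) ≤ Real.exp ((a+1) * c) * Real.exp ((-1:ℝ) * V₂ x) := by
        rw [← Real.exp_add, Real.exp_le_exp]
        nlinarith
      calc V₁ x * Real.exp (a * V₂ x)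
          ≤ V₁ x * (Real.exp ((a+1) * c) * Real.exp ((-1:ℝ) * V₂ x)) :=
            mul_le_mul_of_nonneg_left hexp (hV₁nn x)
        _ = Real.exp ((a+1) * c) * (V₁ x * Real.exp ((-1:ℝ) * V₂ x)) := by ring
    have step2 : (∫ x in sᶜ, Real.exp ((a+1) * c) * (V₁ x * Real.exp ((-1:ℝ) * V₂ x)))
        ≤ Real.exp ((a+1) * c) * K := by
      rw [integral_const_mul]
      refine mul_le_mul_of_nonneg_left ?_ (Real.exp_pos _).le
      exact setIntegral_le_integral (hint (-1) (by norm_num))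
        (Eventually.of_forall fun x => mul_nonneg (hV₁nn x) (Real.exp_pos _).le)
    linarith
  -- lower bound on Z
  have bound3 : δ * Real.exp (a * c') ≤ ∫ x : ℝ, Real.exp (a * V₂ x) := by
    have step1 : (∫ x in Icc (-(δ/2)) (δ/2), Real.exp (a * c'))
        ≤ ∫ x in Icc (-(δ/2)) (δ/2), Real.exp (a * V₂ x) := by
      refine setIntegral_mono_on (integrableOn_const measure_Icc_lt_top.ne)
        hintZ'.integrableOn measurableSet_Icc (fun x hx => ?_)
      rw [Real.exp_le_exp]
      have : V₂ x ≤ c' := by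
        rw [hc'def]
        refine mono_abs hV₂ ?_
        rw [abs_of_pos (by linarith : (0:ℝ) < δ / 2)]
        exact abs_le.2 ⟨hx.1, hx.2⟩
      nlinarith
    have step0 : (∫ _x in Icc (-(δ/2)) (δ/2), Real.exp (a * c')) = δ * Real.exp (a * c') := by
      rw [setIntegral_const, measureReal_def, Real.volume_Icc]
      rw [ENNReal.toReal_ofReal (by linarith), smul_eq_mul]
      ring_nf
    have step2 : (∫ x in Icc (-(δ/2)) (δ/2), Real.exp (a * V₂ x))
        ≤ ∫ x : ℝ, Real.exp (a * V₂ x) :=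
      setIntegral_le_integral hintZ' (Eventually.of_forall fun x => (Real.exp_pos _).le)
    rw [step0] at step1
    linarith
  -- the exponential smallness
  have final : Real.exp ((a+1) * c) * K ≤ (δ/2) * Real.exp (a * c') := by
    have he : Real.exp ((a+1) * c) = Real.exp (a * (c - c')) * Real.exp c * Real.exp (a * c') := by
      rw [← Real.exp_add, ← Real.exp_add]; ring_nf
    rw [he]
    have h1 : Real.exp (a * (c - c')) * Real.exp c * K ≤ ε * Real.exp c * K :=
      mul_le_mul_of_nonneg_right
        (mul_le_mul_of_nonneg_right ha2.le (Real.exp_pos _).le) hKnn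
    have h2 : ε * Real.exp c * K ≤ δ / 2 := by
      rw [hεdef]
      have hden : (0:ℝ) < 2 * (K * Real.exp c + 1) := by positivity
      rw [div_mul_eq_mul_div, div_mul_eq_mul_div, div_le_div_iff₀ hden (by norm_num)]
      have hec : (0:ℝ) < Real.exp c := Real.exp_pos _
      nlinarith
    have hea : (0:ℝ) < Real.exp (a * c') := Real.exp_pos _
    calc Real.exp (a * (c - c')) * Real.exp c * Real.exp (a * c') * K
        = (Real.exp (a * (c - c')) * Real.exp c * K) * Real.exp (a * c') := by ring
      _ ≤ (δ/2) * Real.exp (a * c') := by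
          refine mul_le_mul_of_nonneg_right ?_ hea.le
          calc Real.exp (a * (c - c')) * Real.exp c * K ≤ ε * Real.exp c * K := h1
            _ ≤ δ / 2 := h2
  -- combine
  have split : (∫ x : ℝ, V₁ x * Real.exp (a * V₂ x))
      = (∫ x in s, V₁ x * Real.exp (a * V₂ x)) + ∫ x in sᶜ, V₁ x * Real.exp (a * V₂ x) :=
    (integral_add_compl hs hintV).symm
  rw [split]
  have : (δ/2) * Real.exp (a * c') ≤ (1/2) * ∫ x : ℝ, Real.exp (a * V₂ x) := by linarith
  linarith


lemma exists_big (hV₁ : IsOrlicz V₁) (hV₂ : IsOrlicz V₂)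
    (hgrow : Tendsto (fun x : ℝ => V₁ x / V₂ x) (atTop ⊔ atBot) atTop)
    (hint : ∀ α : ℝ, α < 0 → Integrable (fun x : ℝ => V₁ x * Real.exp (α * V₂ x)))
    (hintZ : ∀ β : ℝ, β < 0 → Integrable (fun x : ℝ => Real.exp (β * V₂ x)))
    (hintN : ∀ β : ℝ, β < 0 → Integrable (fun x : ℝ => V₂ x * Real.exp (β * V₂ x))) :
    ∃ b : ℝ, b < 0 ∧ (∫ x : ℝ, Real.exp (b * V₂ x)) ≤ ∫ x : ℝ, V₁ x * Real.exp (b * V₂ x) := by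
  have hV₁nn := hV₁.2.2.2.2
  have hV₂nn := hV₂.2.2.2.2
  -- get K with V₁ ≥ 2 V₂ outside [-K, K]
  have hev : ∀ᶠ x in (atTop ⊔ atBot), (2:ℝ) ≤ V₁ x / V₂ x := hgrow.eventually_ge_atTop 2
  rw [eventually_sup] at hev
  obtain ⟨K₀, hK₀⟩ := eventually_atTop.1 hev.1
  obtain ⟨K₁, hK₁⟩ := eventually_atBot.1 hev.2
  set K : ℝ := max 1 (max K₀ (-K₁)) with hKdef
  have hK1 : (1:ℝ) ≤ K := le_max_left _ _
  have h2V : ∀ x : ℝ, K ≤ |x| → 2 * V₂ x ≤ V₁ x := by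
    intro x hx
    have hVx : 0 < V₂ x := hV₂.2.2.2.1 x (by
      intro h0; rw [h0] at hx; simp at hx; linarith)
    have hratio : (2:ℝ) ≤ V₁ x / V₂ x := by
      rcases le_abs.1 hx with h | h
      · exact hK₀ x (le_trans (le_trans (le_max_left K₀ (-K₁)) (le_max_right _ _)) h)
      · have : x ≤ K₁ := by
          have : -K₁ ≤ K := le_trans (le_max_right K₀ (-K₁)) (le_max_right _ _)
          linarith
        exact hK₁ x this
    rw [le_div_iff₀ hVx] at hratio
    linarith
  -- get t with V₂ ≥ 1 outside [-t,t]
  obtain ⟨t, ht1, ht⟩ := tendsto_atTop hV₂ 1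
  -- choose n and b
  set C : ℝ := 4 * t + 4 * K * V₂ K with hCdef
  have hCpos : 0 < C := by
    have := hV₂nn K
    nlinarith
  set n : ℝ := max 1 C with hndef
  have hn1 : (1:ℝ) ≤ n := le_max_left _ _
  have hVn : 0 < V₂ n := hV₂.2.2.2.1 n (by positivity)
  set b : ℝ := -(Real.log 2) / V₂ n with hbdef
  have hb0 : b < 0 := div_neg_of_neg_of_pos (neg_neg_iff_pos.2 (Real.log_pos (by norm_num))) hVn
  refine ⟨b, hb0, ?_⟩
  have hintV : Integrable (fun x : ℝ => V₁ x * Real.exp (b * V₂ x)) := hint b hb0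
  have hintZ' : Integrable (fun x : ℝ => Real.exp (b * V₂ x)) := hintZ b hb0
  have hintN' : Integrable (fun x : ℝ => V₂ x * Real.exp (b * V₂ x)) := hintN b hb0
  set Z : ℝ := ∫ x : ℝ, Real.exp (b * V₂ x) with hZdef
  set N₂ : ℝ := ∫ x : ℝ, V₂ x * Real.exp (b * V₂ x) with hN₂def
  set N₁ : ℝ := ∫ x : ℝ, V₁ x * Real.exp (b * V₂ x) with hN₁def
  have hexple : ∀ x : ℝ, Real.exp (b * V₂ x) ≤ 1 := fun x =>
    Real.exp_le_one_iff.2 (mul_nonpos_of_nonpos_of_nonneg hb0.le (hV₂nn x))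
  -- Z ≥ C  (choice of b)
  have hZC : C ≤ Z := by
    have h1 : (∫ x in Icc (-n) n, Real.exp (b * V₂ n)) ≤ ∫ x in Icc (-n) n,
        Real.exp (b * V₂ x) := by
      refine setIntegral_mono_on (integrableOn_const measure_Icc_lt_top.ne)
        hintZ'.integrableOn measurableSet_Icc (fun x hx => ?_)
      rw [Real.exp_le_exp]
      have hVle : V₂ x ≤ V₂ n := mono_abs hV₂ (by
        rw [abs_of_pos (by linarith : (0:ℝ) < n)]; exact abs_le.2 ⟨hx.1, hx.2⟩)
      nlinarith
    have h0 : (∫ _x in Icc (-n) n, Real.exp (b * V₂ n)) = 2 * n * Real.exp (b * V₂ n) := by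
      rw [setIntegral_const, measureReal_def, Real.volume_Icc, ENNReal.toReal_ofReal (by linarith), smul_eq_mul]
      ring
    have hexpb : Real.exp (b * V₂ n) = 1 / 2 := by
      rw [hbdef, div_mul_cancel₀ _ hVn.ne', Real.exp_neg, Real.exp_log (by norm_num)]
      norm_num
    have h2 : (∫ x in Icc (-n) n, Real.exp (b * V₂ x)) ≤ Z :=
      setIntegral_le_integral hintZ' (Eventually.of_forall fun x => (Real.exp_pos _).le)
    rw [h0, hexpb] at h1
    have : n ≤ Z := by linarith
    exact le_trans (le_max_right 1 C) this
  -- N₂ ≥ Z - 2t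
  have hN₂Z : Z - 2 * t ≤ N₂ := by
    set u : Set ℝ := Icc (-t) t with hudef
    have hu : MeasurableSet u := measurableSet_Icc
    have split : Z = (∫ x in u, Real.exp (b * V₂ x)) + ∫ x in uᶜ, Real.exp (b * V₂ x) :=
      (integral_add_compl hu hintZ').symm
    have hsmallu : (∫ x in u, Real.exp (b * V₂ x)) ≤ 2 * t := by
      have : (∫ x in u, Real.exp (b * V₂ x)) ≤ ∫ _x in u, (1:ℝ) :=
        setIntegral_mono_on hintZ'.integrableOn
          (integrableOn_const measure_Icc_lt_top.ne) hu (fun x _ => hexple x)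
      have h0 : (∫ _x in u, (1:ℝ)) = 2 * t := by
        rw [setIntegral_const, measureReal_def, Real.volume_Icc, ENNReal.toReal_ofReal (by linarith), smul_eq_mul]
        ring
      linarith
    have htail : (∫ x in uᶜ, Real.exp (b * V₂ x)) ≤ ∫ x in uᶜ, V₂ x * Real.exp (b * V₂ x) := by
      refine setIntegral_mono_on hintZ'.integrableOn hintN'.integrableOn hu.compl
        (fun x hx => ?_)
      have hxs : t ≤ |x| := by
        simp only [hudef, mem_compl_iff, mem_Icc, not_and_or, not_le] at hx
        rcases hx with h | h
        · rw [abs_of_neg (by linarith)]; linarith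
        · rw [abs_of_pos (by linarith)]; linarith
      have : 1 ≤ V₂ x := ht x hxs
      nlinarith [(Real.exp_pos (b * V₂ x)).le]
    have htail2 : (∫ x in uᶜ, V₂ x * Real.exp (b * V₂ x)) ≤ N₂ :=
      setIntegral_le_integral hintN' (Eventually.of_forall fun x =>
        mul_nonneg (hV₂nn x) (Real.exp_pos _).le)
    linarith
  -- N₁ ≥ 2 N₂ - 4 K V₂ K
  have hN₁N₂ : 2 * N₂ - 4 * K * V₂ K ≤ N₁ := by
    set s : Set ℝ := Icc (-K) K with hsdef
    have hs : MeasurableSet s := measurableSet_Icc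
    have splitN₂ : N₂ = (∫ x in s, V₂ x * Real.exp (b * V₂ x))
        + ∫ x in sᶜ, V₂ x * Real.exp (b * V₂ x) := (integral_add_compl hs hintN').symm
    have hsmalls : (∫ x in s, V₂ x * Real.exp (b * V₂ x)) ≤ 2 * K * V₂ K := by
      have hmono : (∫ x in s, V₂ x * Real.exp (b * V₂ x)) ≤ ∫ _x in s, V₂ K := by
        refine setIntegral_mono_on hintN'.integrableOn
          (integrableOn_const measure_Icc_lt_top.ne) hs (fun x hx => ?_)
        have h1 : V₂ x ≤ V₂ K := mono_abs hV₂ (by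
          rw [abs_of_pos (by linarith : (0:ℝ) < K)]; exact abs_le.2 ⟨hx.1, hx.2⟩)
        nlinarith [hexple x, (Real.exp_pos (b * V₂ x)).le, hV₂nn x]
      have h0 : (∫ _x in s, V₂ K) = 2 * K * V₂ K := by
        rw [setIntegral_const, measureReal_def, Real.volume_Icc, ENNReal.toReal_ofReal (by linarith), smul_eq_mul]
        ring
      linarith
    have htailmono : (∫ x in sᶜ, 2 * (V₂ x * Real.exp (b * V₂ x)))
        ≤ ∫ x in sᶜ, V₁ x * Real.exp (b * V₂ x) := by
      refine setIntegral_mono_on ((hintN'.const_mul 2).integrableOn)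
        hintV.integrableOn hs.compl (fun x hx => ?_)
      have hxs : K ≤ |x| := by
        simp only [hsdef, mem_compl_iff, mem_Icc, not_and_or, not_le] at hx
        rcases hx with h | h
        · rw [abs_of_neg (by linarith)]; linarith
        · rw [abs_of_pos (by linarith)]; linarith
      have := h2V x hxs
      nlinarith [(Real.exp_pos (b * V₂ x)).le]
    have htail1 : (∫ x in sᶜ, V₁ x * Real.exp (b * V₂ x)) ≤ N₁ := by
      have splitN₁ : N₁ = (∫ x in s, V₁ x * Real.exp (b * V₂ x))
          + ∫ x in sᶜ, V₁ x * Real.exp (b * V₂ x) := (integral_add_compl hs hintV).symm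
      have : 0 ≤ ∫ x in s, V₁ x * Real.exp (b * V₂ x) :=
        setIntegral_nonneg hs (fun x _ => mul_nonneg (hV₁nn x) (Real.exp_pos _).le)
      linarith
    have hconst : (∫ x in sᶜ, 2 * (V₂ x * Real.exp (b * V₂ x)))
        = 2 * ∫ x in sᶜ, V₂ x * Real.exp (b * V₂ x) := integral_const_mul 2 _
    nlinarith [splitN₂, hsmalls, htailmono, htail1, hconst]
  -- combine
  have : 2 * Z - C ≤ N₁ := by
    rw [hCdef]; linarith
  linarith


lemma exists_crit (hV₁ : IsOrlicz V₁) (hV₂ : IsOrlicz V₂)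
    (hgrow : Tendsto (fun x : ℝ => V₁ x / V₂ x) (atTop ⊔ atBot) atTop)
    (hint : ∀ α : ℝ, α < 0 → Integrable (fun x : ℝ => V₁ x * Real.exp (α * V₂ x)))
    (hintZ : ∀ β : ℝ, β < 0 → Integrable (fun x : ℝ => Real.exp (β * V₂ x)))
    (hintN : ∀ β : ℝ, β < 0 → Integrable (fun x : ℝ => V₂ x * Real.exp (β * V₂ x))) :
    ∃ c : ℝ, c < 0 ∧ (∫ x : ℝ, V₁ x * Real.exp (c * V₂ x)) = ∫ x : ℝ, Real.exp (c * V₂ x) := by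
  obtain ⟨a, ha0, ha⟩ := exists_small hV₁ hV₂ hint hintZ
  obtain ⟨b, hb0, hb⟩ := exists_big hV₁ hV₂ hgrow hint hintZ hintN
  have hmonoV₁ : ∀ x y : ℝ, |y| ≤ |x| → V₁ y ≤ V₁ x := fun x y h => mono_abs hV₁ h
  rcases le_or_gt a b with hab | hba
  · -- IVT on [a, b]
    set h : ℝ → ℝ := fun α => (∫ x : ℝ, V₁ x * Real.exp (α * V₂ x))
        / (∫ x : ℝ, Real.exp (α * V₂ x)) with hhdef
    have hZc : ∀ α₀ : ℝ, α₀ < 0 →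
        ContinuousAt (fun α : ℝ => ∫ x : ℝ, Real.exp (α * V₂ x)) α₀ := by
      intro α₀ hα₀
      have h1 : (fun α : ℝ => ∫ x : ℝ, (1:ℝ) * Real.exp (α * V₂ x))
          = fun α : ℝ => ∫ x : ℝ, Real.exp (α * V₂ x) := by
        funext α; simp only [one_mul]
      have := contAt hV₂ continuous_const (fun _ => zero_le_one)
        (fun β hβ => by simpa only [one_mul] using hintZ β hβ) hα₀
      rwa [h1] at this
    have hcont : ContinuousOn h (Icc a b) := by
      intro α hα
      have hα0 : α < 0 := lt_of_le_of_lt hα.2 hb0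
      have hZ : 0 < ∫ x : ℝ, Real.exp (α * V₂ x) := Zpos hV₂ (hintZ α hα0)
      exact ((contAt hV₂ (cont hV₁) hV₁.2.2.2.2 hint hα0).div (hZc α hα0)
        hZ.ne').continuousWithinAt
    have hZa : 0 < ∫ x : ℝ, Real.exp (a * V₂ x) := Zpos hV₂ (hintZ a ha0)
    have hZb : 0 < ∫ x : ℝ, Real.exp (b * V₂ x) := Zpos hV₂ (hintZ b hb0)
    have hmem : (1:ℝ) ∈ Icc (h a) (h b) := by
      constructor
      · exact div_le_one_of_le₀ ha hZa.le
      · rw [hhdef]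
        exact (one_le_div hZb).2 hb
    obtain ⟨c, hc, hceq⟩ := intermediate_value_Icc hab hcont hmem
    have hc0 : c < 0 := lt_of_le_of_lt hc.2 hb0
    refine ⟨c, hc0, ?_⟩
    have hZc' : 0 < ∫ x : ℝ, Real.exp (c * V₂ x) := Zpos hV₂ (hintZ c hc0)
    rw [hhdef] at hceq
    simpa [div_eq_one_iff_eq hZc'.ne'] using hceq
  · -- b < a : monotonicity forces equality at b
    have hZa : 0 < ∫ x : ℝ, Real.exp (a * V₂ x) := Zpos hV₂ (hintZ a ha0)
    have hZb : 0 < ∫ x : ℝ, Real.exp (b * V₂ x) := Zpos hV₂ (hintZ b hb0)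
    have hch := cheb_le hV₂ (hint b hb0) (hint a ha0) (hintZ b hb0) (hintZ a ha0)
      hmonoV₁ hba.le
    refine ⟨b, hb0, ?_⟩
    have h1 : (∫ x : ℝ, Real.exp (b * V₂ x)) * (∫ x : ℝ, Real.exp (a * V₂ x))
        ≤ (∫ x : ℝ, V₁ x * Real.exp (b * V₂ x)) * (∫ x : ℝ, Real.exp (a * V₂ x)) :=
      mul_le_mul_of_nonneg_right hb hZa.le
    have h2 : (∫ x : ℝ, V₁ x * Real.exp (a * V₂ x)) * (∫ x : ℝ, Real.exp (b * V₂ x))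
        ≤ (∫ x : ℝ, Real.exp (a * V₂ x)) * (∫ x : ℝ, Real.exp (b * V₂ x)) :=
      mul_le_mul_of_nonneg_right ha hZb.le
    have heq : (∫ x : ℝ, V₁ x * Real.exp (b * V₂ x)) * (∫ x : ℝ, Real.exp (a * V₂ x))
        = (∫ x : ℝ, Real.exp (b * V₂ x)) * (∫ x : ℝ, Real.exp (a * V₂ x)) := by
      nlinarith
    exact mul_right_cancel₀ hZa.ne' heq

end Orlicz

/-- There exists `R̄ > 0` with `m_{V₁}(μ_{V₂,α(R̄)}) = 1` such that for all
`0 < R ≤ R̄`, `m_{V₁}(μ_{V₂,α(R)}) ≤ 1`; here `α(R) < 0` is the unique solution of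
`m_{V₂}(μ_{V₂,α(R)}) = R`. -/
theorem stmt15 (V₁ V₂ : ℝ → ℝ) (hV₁ : IsOrlicz V₁) (hV₂ : IsOrlicz V₂)
    (hgrow : Tendsto (fun x : ℝ => V₁ x / V₂ x) (atTop ⊔ atBot) atTop)
    (hint : ∀ α : ℝ, α < 0 → Integrable (fun x : ℝ => V₁ x * Real.exp (α * V₂ x)))
    (alph : ℝ → ℝ)
    (halph : ∀ R : ℝ, 0 < R → alph R < 0 ∧
      (∫ x : ℝ, V₂ x * Real.exp (alph R * V₂ x))
        = R * ∫ x : ℝ, Real.exp (alph R * V₂ x)) :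
    ∃ Rb : ℝ, 0 < Rb ∧
      (∫ x : ℝ, V₁ x * Real.exp (alph Rb * V₂ x))
        = 1 * ∫ x : ℝ, Real.exp (alph Rb * V₂ x) ∧
      ∀ R : ℝ, 0 < R → R ≤ Rb →
        (∫ x : ℝ, V₁ x * Real.exp (alph R * V₂ x))
          ≤ 1 * ∫ x : ℝ, Real.exp (alph R * V₂ x) := by
  classical
  have hintZ : ∀ β : ℝ, β < 0 → Integrable (fun x : ℝ => Real.exp (β * V₂ x)) :=
    fun β hβ => Orlicz.int_exp hV₁ hV₂ hint hβ
  have hintN : ∀ β : ℝ, β < 0 → Integrable (fun x : ℝ => V₂ x * Real.exp (β * V₂ x)) :=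
    fun β hβ => Orlicz.int_V₂exp hV₁ hV₂ hint hβ
  obtain ⟨c, hc0, hceq⟩ := Orlicz.exists_crit hV₁ hV₂ hgrow hint hintZ hintN
  have hZc : 0 < ∫ x : ℝ, Real.exp (c * V₂ x) := Orlicz.Zpos hV₂ (hintZ c hc0)
  have hNc : 0 < ∫ x : ℝ, V₂ x * Real.exp (c * V₂ x) := Orlicz.N₂pos hV₂ (hintN c hc0)
  set Rb : ℝ := (∫ x : ℝ, V₂ x * Real.exp (c * V₂ x)) / (∫ x : ℝ, Real.exp (c * V₂ x))
    with hRbdef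
  have hRbpos : 0 < Rb := div_pos hNc hZc
  have hRbZ : Rb * (∫ x : ℝ, Real.exp (c * V₂ x)) = ∫ x : ℝ, V₂ x * Real.exp (c * V₂ x) := by
    rw [hRbdef, div_mul_cancel₀ _ hZc.ne']
  obtain ⟨haRb0, haRbeq⟩ := halph Rb hRbpos
  have hZR : 0 < ∫ x : ℝ, Real.exp (alph Rb * V₂ x) := Orlicz.Zpos hV₂ (hintZ _ haRb0)
  have key : alph Rb = c := by
    by_contra hne
    rcases lt_or_gt_of_ne hne with hlt | hgt
    · have hch := Orlicz.cheb_lt hV₂ (hintN _ haRb0) (hintN _ hc0)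
        (hintZ _ haRb0) (hintZ _ hc0) hlt
      rw [haRbeq] at hch
      nlinarith
    · have hch := Orlicz.cheb_lt hV₂ (hintN _ hc0) (hintN _ haRb0)
        (hintZ _ hc0) (hintZ _ haRb0) hgt
      rw [haRbeq] at hch
      nlinarith
  refine ⟨Rb, hRbpos, ?_, ?_⟩
  · rw [key, one_mul]; exact hceq
  · intro R hR hRle
    obtain ⟨haR0, haReq⟩ := halph R hR
    have hZaR : 0 < ∫ x : ℝ, Real.exp (alph R * V₂ x) := Orlicz.Zpos hV₂ (hintZ _ haR0)
    have hle : alph R ≤ c := by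
      by_contra hgt
      push_neg at hgt
      have hch := Orlicz.cheb_lt hV₂ (hintN _ hc0) (hintN _ haR0)
        (hintZ _ hc0) (hintZ _ haR0) hgt
      rw [haReq] at hch
      have hRRb : R * ((∫ x : ℝ, Real.exp (alph R * V₂ x)) * (∫ x : ℝ, Real.exp (c * V₂ x)))
          ≤ Rb * ((∫ x : ℝ, Real.exp (alph R * V₂ x)) * (∫ x : ℝ, Real.exp (c * V₂ x))) :=
        mul_le_mul_of_nonneg_right hRle (by positivity)
      nlinarith
    have hch := Orlicz.cheb_le hV₂ (hint _ haR0) (hint _ hc0) (hintZ _ haR0) (hintZ _ hc0)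
      (fun x y h => Orlicz.mono_abs hV₁ h) hle
    rw [hceq] at hch
    rw [one_mul]
    nlinarith
end
end
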